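/- arXiv:0710.1254 — 9 statements merged into one kernel-verified Lean document; each statement's English description precedes it below -/
import Mathlib

section
/- (Special Isomorphism Theorem.) Let G be a group. The map sending each subgroup H ≤ G to its right-coset setoid rightRel H is an injective lattice homomorphism from the lattice of subgroups of G into the lattice of setoids on G: for all subgroups H, K of G one has rightRel (H ⊓ K) = rightRel H ⊓ rightRel K and rightRel (H ⊔ K) = rightRel H ⊔ rightRel K, and rightRel H = rightRel K implies H = K. -/
open QuotientGroup

lemma rightRel_mono' {G : Type*} [Group G] {H K : Subgroup G} (h : H ≤ K) :
    rightRel H ≤ rightRel K := by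
  intro x y hxy
  rw [rightRel_apply] at hxy ⊢
  exact h hxy

/-- Special Isomorphism Theorem: `H ↦ rightRel H` is an injective lattice
homomorphism from the subgroup lattice of `G` into the lattice of setoids on `G`. -/
theorem stmt_4 (G : Type*) [Group G] :
    (∀ H K : Subgroup G,
        QuotientGroup.rightRel (H ⊓ K) =
          QuotientGroup.rightRel H ⊓ QuotientGroup.rightRel K) ∧
    (∀ H K : Subgroup G,
        QuotientGroup.rightRel (H ⊔ K) =
          QuotientGroup.rightRel H ⊔ QuotientGroup.rightRel K) ∧
    Function.Injective (fun H : Subgroup G => QuotientGroup.rightRel H) := by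
  refine ⟨fun H K => ?_, fun H K => ?_, fun H K h => ?_⟩
  · ext x y
    show rightRel (H ⊓ K) x y ↔ rightRel H x y ∧ rightRel K x y
    simp [rightRel_apply, Subgroup.mem_inf]
  · refine le_antisymm ?_
      (sup_le (rightRel_mono' le_sup_left) (rightRel_mono' le_sup_right))
    -- key: the sup relation is right-invariant-ish via a subgroup argument
    intro x y hxy
    rw [rightRel_apply] at hxy
    -- show : ∀ g ∈ H ⊔ K, ∀ z, (rightRel H ⊔ rightRel K) z (g * z)
    have key : ∀ g ∈ H ⊔ K, ∀ z : G, (rightRel H ⊔ rightRel K) z (g * z) := by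
      intro g hg
      rw [Subgroup.sup_eq_closure] at hg
      refine Subgroup.closure_induction (fun w hw z => ?_) (fun z => ?_)
        (fun a b _ _ ha hb z => ?_) (fun a _ ha z => ?_) hg
      · rcases hw with hw | hw
        · exact le_sup_left (α := Setoid G) (by rw [rightRel_apply]; simpa using hw)
        · exact le_sup_right (α := Setoid G) (by rw [rightRel_apply]; simpa using hw)
      · simpa using (rightRel H ⊔ rightRel K).refl z
      · have h1 := hb z
        have h2 := ha (b * z)
        rw [mul_assoc]
        exact (rightRel H ⊔ rightRel K).trans h1 h2
      · have := ha (a⁻¹ * z)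
        rw [mul_inv_cancel_left] at this
        exact (rightRel H ⊔ rightRel K).symm this
    have := key (y * x⁻¹) hxy x
    simpa using this
  · ext g
    have h1 : rightRel H g 1 ↔ rightRel K g 1 := by rw [show rightRel H = rightRel K from h]
    rw [rightRel_apply, rightRel_apply] at h1
    simpa using h1
end

section
/- Let Ω be a finite set and s, t setoids on Ω, with partition-stabilizer subgroups G_s, G_t ≤ Equiv.Perm Ω. Then G_{s ⊓ t} = G_s ⊓ G_t and G_{s ⊔ t} = G_s ⊔ G_t; that is, the stabilizer of the common refinement is the intersection of the stabilizers, and the stabilizer of the finest common coarsening is the subgroup generated by the two stabilizers. -/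
/-- The partition-stabilizer subgroup of a setoid `s`: all permutations of `Ω`
moving every point only within its `s`-class. -/
def partitionStabilizer {Ω : Type*} (s : Setoid Ω) : Subgroup (Equiv.Perm Ω) where
  carrier := {σ : Equiv.Perm Ω | ∀ x : Ω, s.r (σ x) x}
  one_mem' := fun x => s.iseqv.refl x
  mul_mem' := by
    intro σ τ hσ hτ x
    exact s.iseqv.trans (hσ (τ x)) (hτ x)
  inv_mem' := by
    intro σ hσ x
    have h := hσ (σ⁻¹ x)
    rw [show σ (σ⁻¹ x) = x from σ.apply_symm_apply x] at h
    exact s.iseqv.symm h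

lemma mem_partitionStabilizer {Ω : Type*} {s : Setoid Ω} {σ : Equiv.Perm Ω} :
    σ ∈ partitionStabilizer s ↔ ∀ x : Ω, s.r (σ x) x := Iff.rfl

lemma swap_mem_partitionStabilizer {Ω : Type*} [DecidableEq Ω] {s : Setoid Ω} {x y : Ω}
    (h : s.r x y) : Equiv.swap x y ∈ partitionStabilizer s := by
  intro z
  rcases eq_or_ne z x with rfl | hx
  · rw [Equiv.swap_apply_left]; exact s.iseqv.symm h
  rcases eq_or_ne z y with rfl | hy
  · rw [Equiv.swap_apply_right]; exact h
  · rw [Equiv.swap_apply_of_ne_of_ne hx hy]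

lemma swap_mem_sup {Ω : Type*} [DecidableEq Ω] {s t : Setoid Ω} {x y : Ω}
    (h : Relation.EqvGen (fun a b => s.r a b ∨ t.r a b) x y) :
    Equiv.swap x y ∈ partitionStabilizer s ⊔ partitionStabilizer t := by
  induction h with
  | rel a b hab =>
    rcases hab with hab | hab
    · exact Subgroup.mem_sup_left (swap_mem_partitionStabilizer hab)
    · exact Subgroup.mem_sup_right (swap_mem_partitionStabilizer hab)
  | refl a =>
    rw [Equiv.swap_self]
    exact Subgroup.one_mem _
  | symm a b _ ih => rwa [Equiv.swap_comm]
  | trans a b c _ _ ih1 ih2 =>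
    rcases eq_or_ne a c with rfl | hac
    · rw [Equiv.swap_self]
      exact Subgroup.one_mem _
    rcases eq_or_ne a b with rfl | hab
    · exact ih2
    rcases eq_or_ne b c with rfl | hbc
    · exact ih1
    have : Equiv.swap a c = Equiv.swap b c * Equiv.swap a b * Equiv.swap b c := by
      rw [Equiv.swap_mul_swap_mul_swap hab hac, Equiv.swap_comm]
    rw [this]
    exact Subgroup.mul_mem _ (Subgroup.mul_mem _ ih2 ih1) ih2

lemma mem_sup_of_mem_stab {Ω : Type*} [Fintype Ω] [DecidableEq Ω] {s t : Setoid Ω}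
    (σ : Equiv.Perm Ω) (hσ : ∀ x, Relation.EqvGen (fun a b => s.r a b ∨ t.r a b) (σ x) x) :
    σ ∈ partitionStabilizer s ⊔ partitionStabilizer t := by
  generalize hn : (Finset.univ.filter fun x => σ x ≠ x).card = n
  induction n using Nat.strong_induction_on generalizing σ with
  | _ n ih =>
    by_cases h1 : ∀ x, σ x = x
    · have : σ = 1 := Equiv.ext h1
      rw [this]; exact Subgroup.one_mem _
    push_neg at h1
    obtain ⟨x, hx⟩ := h1
    set τ := Equiv.swap x (σ x) * σ with hτdef
    have hτfix : ∀ y, σ y = y → τ y = y := by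
      intro y hy
      have hyx : y ≠ x := by rintro rfl; exact hx hy
      have hysx : y ≠ σ x := by
        rintro rfl
        exact hx (σ.injective (hy.trans rfl))
      simp [hτdef, hy, Equiv.swap_apply_of_ne_of_ne hyx hysx]
    have hτx : τ x = x := by simp [hτdef]
    have hsub : (Finset.univ.filter fun y => τ y ≠ y) ⊂ (Finset.univ.filter fun y => σ y ≠ y) := by
      constructor
      · intro y hy
        simp only [Finset.mem_filter, Finset.mem_univ, true_and] at hy ⊢
        intro hc; exact hy (hτfix y hc)
      · intro hle
        have := hle (by simp [hx] : x ∈ Finset.univ.filter fun y => σ y ≠ y)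
        simp [hτx] at this
    have hcard : (Finset.univ.filter fun y => τ y ≠ y).card < n := by
      rw [← hn]; exact Finset.card_lt_card hsub
    have hτrel : ∀ y, Relation.EqvGen (fun a b => s.r a b ∨ t.r a b) (τ y) y := by
      intro y
      have h2 : Relation.EqvGen (fun a b => s.r a b ∨ t.r a b) (τ y) (σ y) := by
        have hswap : Relation.EqvGen (fun a b => s.r a b ∨ t.r a b) (σ x) x := hσ x
        show Relation.EqvGen _ (Equiv.swap x (σ x) (σ y)) (σ y)
        rcases eq_or_ne (σ y) x with he | hne
        · rw [he, Equiv.swap_apply_left]; exact hswap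
        rcases eq_or_ne (σ y) (σ x) with he | hne2
        · rw [he, Equiv.swap_apply_right]; exact Relation.EqvGen.symm _ _ hswap
        · rw [Equiv.swap_apply_of_ne_of_ne hne hne2]; exact Relation.EqvGen.refl _
      exact Relation.EqvGen.trans _ _ _ h2 (hσ y)
    have hτmem : τ ∈ partitionStabilizer s ⊔ partitionStabilizer t := ih _ hcard τ hτrel rfl
    have hσeq : σ = Equiv.swap x (σ x) * τ := by
      rw [hτdef, ← mul_assoc, Equiv.swap_mul_self, one_mul]
    rw [hσeq]
    exact Subgroup.mul_mem _ (swap_mem_sup (Relation.EqvGen.symm _ _ (hσ x))) hτmem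

/-- On a finite set, the partition stabilizer of the common refinement is the
intersection of the stabilizers, and the partition stabilizer of the finest
common coarsening is the subgroup generated by the two stabilizers. -/
theorem stmt_7 {Ω : Type*} [Fintype Ω] (s t : Setoid Ω) :
    partitionStabilizer (s ⊓ t) = partitionStabilizer s ⊓ partitionStabilizer t ∧
    partitionStabilizer (s ⊔ t) = partitionStabilizer s ⊔ partitionStabilizer t := by
  classical
  have hmono : ∀ {r u : Setoid Ω}, r ≤ u → partitionStabilizer r ≤ partitionStabilizer u :=
    fun h σ hσ x => h (hσ x)
  constructor
  · apply le_antisymm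
    · exact le_inf (hmono inf_le_left) (hmono inf_le_right)
    · intro σ hσ x
      exact ⟨hσ.1 x, hσ.2 x⟩
  · apply le_antisymm
    · intro σ hσ
      apply mem_sup_of_mem_stab σ
      intro x
      have := hσ x
      rw [Setoid.sup_eq_eqvGen] at this
      exact this
    · exact sup_le (hmono le_sup_left) (hmono le_sup_right)
end

section
/- Let a group G act on a set A and let H, K be subgroups of G (acting on A by restriction). Then the orbit setoid of the action of H ⊔ K (the subgroup generated by H ∪ K) on A equals the join, in the lattice of setoids on A, of the orbit setoids of H and of K: orbitRel(H ⊔ K) = orbitRel(H) ⊔ orbitRel(K). -/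
/-- For a group `G` acting on `A` and subgroups `H, K ≤ G`, the orbit setoid of
the action of `H ⊔ K` on `A` is the join of the orbit setoids of `H` and `K`
in the lattice of setoids on `A`. -/
theorem stmt_8 {G A : Type*} [Group G] [MulAction G A] (H K : Subgroup G) :
    MulAction.orbitRel (H ⊔ K : Subgroup G) A =
      MulAction.orbitRel H A ⊔ MulAction.orbitRel K A := by
  set s := MulAction.orbitRel H A ⊔ MulAction.orbitRel K A with hs
  apply le_antisymm
  · have key : ∀ g ∈ (H ⊔ K : Subgroup G), ∀ b : A, s.r (g • b) b := by
      intro g hg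
      rw [Subgroup.sup_eq_closure] at hg
      refine Subgroup.closure_induction ?_ ?_ ?_ ?_ hg
      · rintro y (h | h) b
        · exact (le_sup_left : MulAction.orbitRel H A ≤ s) ⟨⟨y, h⟩, rfl⟩
        · exact (le_sup_right : MulAction.orbitRel K A ≤ s) ⟨⟨y, h⟩, rfl⟩
      · intro b; simpa using s.refl b
      · intro x y _ _ ihx ihy b
        have h1 : s.r (x • y • b) (y • b) := ihx (y • b)
        have h2 : s.r (y • b) b := ihy b
        simpa [mul_smul] using s.trans h1 h2
      · intro x _ ih b
        have := ih (x⁻¹ • b)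
        simpa using s.symm this
    rintro a b ⟨⟨g, hg⟩, rfl⟩
    exact key g hg b
  · refine sup_le ?_ ?_ <;>
    · rintro a b ⟨⟨g, hg⟩, rfl⟩
      exact ⟨⟨g, by simp [Subgroup.mem_sup_left hg, Subgroup.mem_sup_right hg]⟩, rfl⟩
end

section
/- Let G be a finite group equipped with the uniform probability measure p(g) = 1/|G|, let G₁, …, G_n be subgroups of G, and let s_i be the right-coset setoid of G_i. Then the entropy of the joint information element equals the log-index of the intersection, H_p(⨅_{i∈[n]} s_i) = log(|G| / |⨅_{i∈[n]} G_i|), and the entropy of the common information element equals the log-index of the generated subgroup, H_p(⨆_{i∈[n]} s_i) = log(|G| / |⨆_{i∈[n]} G_i|). -/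
open Classical in
/-- Probability of the equivalence class `c` of the setoid `s`. -/
noncomputable def classProb {Ω : Type*} [Fintype Ω] (p : Ω → ℝ) (s : Setoid Ω)
    (c : Quotient s) : ℝ :=
  ∑ ω ∈ Finset.univ.filter (fun ω => (⟦ω⟧ : Quotient s) = c), p ω

open Classical in
/-- Shannon entropy of the partition induced by the setoid `s`
(with the convention `0 · log 0 = 0`). -/
noncomputable def entropy {Ω : Type*} [Fintype Ω] (p : Ω → ℝ) (s : Setoid Ω) : ℝ :=
  -∑ c : Quotient s, classProb p s c * Real.log (classProb p s c)



section Aux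
open Classical
set_option linter.unnecessarySimpa false
set_option linter.unusedVariables false

lemma rightRel_iInf {G : Type*} [Group G] {ι : Sort*} (G' : ι → Subgroup G) :
    (⨅ i, QuotientGroup.rightRel (G' i)) = QuotientGroup.rightRel (⨅ i, G' i) := by
  ext x y
  rw [iInf, Setoid.sInf_iff, QuotientGroup.rightRel_apply, Subgroup.mem_iInf]
  constructor
  · intro h i
    have := h (QuotientGroup.rightRel (G' i)) ⟨i, rfl⟩
    rwa [QuotientGroup.rightRel_apply] at this
  · rintro h s ⟨i, rfl⟩
    rw [QuotientGroup.rightRel_apply]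
    exact h i

lemma rightRel_iSup {G : Type*} [Group G] {ι : Sort*} (G' : ι → Subgroup G) :
    (⨆ i, QuotientGroup.rightRel (G' i)) = QuotientGroup.rightRel (⨆ i, G' i) := by
  apply le_antisymm
  · refine iSup_le fun i => Setoid.le_def.2 fun {x y} h => ?_
    rw [QuotientGroup.rightRel_apply] at h ⊢
    exact Subgroup.mem_iSup_of_mem i h
  · refine Setoid.le_def.2 fun {x y} h => ?_
    rw [QuotientGroup.rightRel_apply] at h
    set s := ⨆ i, QuotientGroup.rightRel (G' i) with hs
    have key : ∀ g ∈ (⨆ i, G' i), ∀ z : G, s z (g * z) := by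
      intro g hg
      refine Subgroup.iSup_induction G' (C := fun g => ∀ z : G, s z (g * z)) hg ?_ ?_ ?_
      · intro i g hgi z
        have h1 : QuotientGroup.rightRel (G' i) ≤ s := hs ▸ le_iSup (fun i => QuotientGroup.rightRel (G' i)) i
        refine Setoid.le_def.1 h1 ?_
        rw [QuotientGroup.rightRel_apply]
        simpa using hgi
      · intro z; simpa using Setoid.refl' s z
      · intro a b ha hb z
        have := Setoid.trans' s (hb z) (ha (b * z))
        simpa [mul_assoc] using this
    have := key _ h x
    simpa using this

lemma classProb_rightRel {G : Type*} [Group G] [Fintype G] (H : Subgroup G)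
    (c : Quotient (QuotientGroup.rightRel H)) :
    classProb (fun _ : G => ((Fintype.card G : ℝ))⁻¹) (QuotientGroup.rightRel H) c =
      (Nat.card H : ℝ) / (Fintype.card G : ℝ) := by
  induction c using Quotient.inductionOn with
  | h x =>
    have key : ∀ y : G, (⟦y⟧ : Quotient (QuotientGroup.rightRel H)) = ⟦x⟧ ↔ y * x⁻¹ ∈ H := by
      intro y
      rw [Quotient.eq]
      change QuotientGroup.rightRel H y x ↔ _
      rw [QuotientGroup.rightRel_apply]
      constructor
      · intro h; simpa [mul_inv_rev] using H.inv_mem h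
      · intro h; simpa [mul_inv_rev] using H.inv_mem h
    have hcard : (Finset.univ.filter
        (fun ω : G => (⟦ω⟧ : Quotient (QuotientGroup.rightRel H)) = ⟦x⟧)).card
        = Nat.card H := by
      rw [Nat.card_eq_fintype_card]
      rw [show (Finset.univ.filter
          (fun ω : G => (⟦ω⟧ : Quotient (QuotientGroup.rightRel H)) = ⟦x⟧)).card
          = Fintype.card {y : G // (⟦y⟧ : Quotient (QuotientGroup.rightRel H)) = ⟦x⟧}
        from (Fintype.card_subtype _).symm]
      refine Fintype.card_congr ⟨fun y => ⟨y.1 * x⁻¹, (key y.1).1 y.2⟩,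
        fun h => ⟨h.1 * x, (key _).2 (by simpa using h.2)⟩, ?_, ?_⟩
      · intro y; ext; simp
      · intro h; ext; simp
    rw [classProb, Finset.sum_const, nsmul_eq_mul, div_eq_mul_inv]
    congr 1
    norm_cast
    convert hcard

private lemma neg_helper (N k g : ℝ) (h : N * k = g) (hk : 0 < k) (hg : 0 < g) :
    -(N * (k / g * Real.log (k / g))) = Real.log (g / k) := by
  have h1 : N * (k / g) = 1 := by field_simp [h]; exact h
  rw [show N * (k / g * Real.log (k / g)) = N * (k / g) * Real.log (k / g) by ring,
    h1, one_mul, ← Real.log_inv, inv_div]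

lemma entropy_of_const {Ω : Type*} [Fintype Ω] (p : Ω → ℝ) (s : Setoid Ω) (q : ℝ)
    (h : ∀ c, classProb p s c = q) :
    entropy p s = -((Nat.card (Quotient s) : ℝ) * (q * Real.log q)) := by
  rw [entropy]
  simp only [h]
  rw [Finset.sum_const, Finset.card_univ, nsmul_eq_mul, Nat.card_eq_fintype_card]

lemma entropy_rightRel {G : Type*} [Group G] [Fintype G] (H : Subgroup G) :
    entropy (fun _ : G => ((Fintype.card G : ℝ))⁻¹) (QuotientGroup.rightRel H) =
      Real.log ((Fintype.card G : ℝ) / (Nat.card H : ℝ)) := by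
  have hq : Nat.card (Quotient (QuotientGroup.rightRel H)) * Nat.card H
      = Fintype.card G := by
    rw [Nat.card_congr (QuotientGroup.quotientRightRelEquivQuotientLeftRel H),
      ← Nat.card_eq_fintype_card (α := G)]
    exact (Subgroup.card_eq_card_quotient_mul_card_subgroup H).symm
  have hk : (0:ℝ) < (Nat.card H : ℝ) := by exact_mod_cast Nat.card_pos
  have hg : (0:ℝ) < (Fintype.card G : ℝ) := by exact_mod_cast Fintype.card_pos
  rw [entropy_of_const _ _ _ (classProb_rightRel H)]
  exact neg_helper _ _ _ (by exact_mod_cast hq) hk hg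

end Aux

/-- For a finite group `G` with the uniform measure and right-coset setoids of
subgroups `G₁, …, G_n`: the entropy of the joint information element is the
log-index of the intersection subgroup, and the entropy of the common
information element is the log-index of the generated subgroup. -/
theorem stmt_9 {G : Type*} [Group G] [Fintype G] (n : ℕ) (G' : Fin n → Subgroup G) :
    entropy (fun _ : G => ((Fintype.card G : ℝ))⁻¹)
        (⨅ i, QuotientGroup.rightRel (G' i)) =
      Real.log ((Fintype.card G : ℝ) / (Nat.card ↥(⨅ i, G' i) : ℝ)) ∧
    entropy (fun _ : G => ((Fintype.card G : ℝ))⁻¹)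
        (⨆ i, QuotientGroup.rightRel (G' i)) =
      Real.log ((Fintype.card G : ℝ) / (Nat.card ↥(⨆ i, G' i) : ℝ)) := by
  constructor
  · rw [rightRel_iInf, entropy_rightRel]
  · rw [rightRel_iSup, entropy_rightRel]
end

section
/- (Subgroup Approximation Theorem.) Let (Ω, p) be a finite probability space and let s₁, …, s_n be setoids on Ω. For every ε > 0 there exist N ≥ 1 and subgroups H₁, …, H_n of Equiv.Perm (Fin N) such that for every nonempty subset α ⊆ {1, …, n}: | H_p(⨅_{i∈α} s_i) − (1/N)·log( N! / |⨅_{i∈α} H_i| ) | < ε and | H_p(⨆_{i∈α} s_i) − (1/N)·log( N! / |⨆_{i∈α} H_i| ) | < ε. -/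
-- stabilizer subgroup of a setoid
def stabS {X : Type*} (t : Setoid X) : Subgroup (Equiv.Perm X) where
  carrier := {σ | ∀ x, t (σ x) x}
  one_mem' := fun x => t.refl x
  mul_mem' := fun {a b} ha hb x => t.trans (ha (b x)) (hb x)
  inv_mem' := fun {a} ha x => by
    have := ha (a⁻¹ x); simp at this; exact t.symm this

lemma mem_stabS {X : Type*} {t : Setoid X} {σ : Equiv.Perm X} :
    σ ∈ stabS t ↔ ∀ x, t (σ x) x := Iff.rfl

open Classical in
lemma card_stabS {X : Type*} [Fintype X] (t : Setoid X) :
    Nat.card (stabS t) = ∏ c : Quotient t, (Fintype.card {x // (⟦x⟧ : Quotient t) = c}).factorial := by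
  classical
  have : Nat.card (stabS t) = Fintype.card {g : Equiv.Perm X // (Quotient.mk t) ∘ g = Quotient.mk t} := by
    rw [← Nat.card_eq_fintype_card]
    apply Nat.card_congr
    apply Equiv.subtypeEquivRight
    intro g
    simp only [mem_stabS, funext_iff, Function.comp_apply]
    constructor
    · intro h x; exact Quotient.sound (h x)
    · intro h x; exact Quotient.exact (h x)
  rw [this, DomMulAct.stabilizer_card]

lemma setoid_biInf_rel {X ι : Type*} (α : Finset ι) (t : ι → Setoid X) (x y : X) :
    (⨅ i ∈ α, t i) x y ↔ ∀ i ∈ α, t i x y := by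
  rw [iInf_subtype']
  rw [iInf, Setoid.sInf_iff]
  simp [Subtype.forall]

lemma stabS_mono {X : Type*} {t t' : Setoid X} (h : t ≤ t') : stabS t ≤ stabS t' :=
  fun σ hσ x => h (hσ x)

lemma stabS_biInf {X ι : Type*} (α : Finset ι) (t : ι → Setoid X) :
    stabS (⨅ i ∈ α, t i) = ⨅ i ∈ α, stabS (t i) := by
  ext σ
  simp only [Subgroup.mem_iInf, mem_stabS, setoid_biInf_rel]
  tauto

lemma setoid_biSup_eq {X ι : Type*} (α : Finset ι) (t : ι → Setoid X) :
    (⨆ i ∈ α, t i) = Relation.EqvGen.setoid (fun x y => ∃ i ∈ α, t i x y) := by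
  rw [iSup_subtype', iSup, Setoid.sSup_eq_eqvGen]
  congr 1
  ext x y
  constructor
  · rintro ⟨r, ⟨⟨i, hi⟩, rfl⟩, hr⟩; exact ⟨i, hi, hr⟩
  · rintro ⟨i, hi, hr⟩; exact ⟨t i, ⟨⟨i, hi⟩, rfl⟩, hr⟩

lemma swap_mem_stabS {X : Type*} [DecidableEq X] {t : Setoid X} {a b : X} (h : t a b) :
    Equiv.swap a b ∈ stabS t := by
  intro x
  rcases eq_or_ne x a with rfl | hxa
  · rw [Equiv.swap_apply_left]; exact t.symm h
  rcases eq_or_ne x b with rfl | hxb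
  · rw [Equiv.swap_apply_right]; exact h
  · rw [Equiv.swap_apply_of_ne_of_ne hxa hxb]

lemma swap_mem_biSup {X ι : Type*} [DecidableEq X] (α : Finset ι) (t : ι → Setoid X)
    {a b : X} (h : (⨆ i ∈ α, t i) a b) :
    Equiv.swap a b ∈ ⨆ i ∈ α, stabS (t i) := by
  rw [setoid_biSup_eq] at h
  have h' : Relation.EqvGen (fun x y => ∃ i ∈ α, t i x y) a b := h
  clear h
  induction h' with
  | rel x y hxy =>
    obtain ⟨i, hi, hr⟩ := hxy
    exact Subgroup.mem_iSup_of_mem i (Subgroup.mem_iSup_of_mem hi (swap_mem_stabS hr))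
  | refl x => rw [Equiv.swap_self]; exact Subgroup.one_mem _
  | symm x y _ ih => rw [Equiv.swap_comm]; exact ih
  | trans x y z _ _ ih1 ih2 =>
    rcases eq_or_ne x y with rfl | hxy
    · exact ih2
    rcases eq_or_ne y z with rfl | hyz
    · exact ih1
    rcases eq_or_ne x z with rfl | hxz
    · rw [Equiv.swap_self]; exact Subgroup.one_mem _
    · have : Equiv.swap x y * Equiv.swap y z * Equiv.swap x y = Equiv.swap x z := by
        have := Equiv.swap_mul_swap_mul_swap (x := z) (y := y) (z := x)
          hyz.symm hxz.symm
        rw [Equiv.swap_comm y x, Equiv.swap_comm z y] at this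
        exact this
      rw [← this]
      exact Subgroup.mul_mem _ (Subgroup.mul_mem _ ih1 ih2) ih1

open Equiv.Perm in
lemma stabS_biSup {X ι : Type*} [Fintype X] [DecidableEq X] (α : Finset ι) (t : ι → Setoid X) :
    stabS (⨆ i ∈ α, t i) = ⨆ i ∈ α, stabS (t i) := by
  apply le_antisymm
  · have key : ∀ (k : ℕ) (σ : Equiv.Perm X), σ.support.card = k →
        σ ∈ stabS (⨆ i ∈ α, t i) → σ ∈ ⨆ i ∈ α, stabS (t i) := by
      intro k
      induction k using Nat.strong_induction_on with
      | _ k ih =>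
      intro σ hn hσ
      rcases eq_or_ne σ 1 with rfl | hne
      · exact Subgroup.one_mem _
      · obtain ⟨x, hx⟩ : ∃ x, σ x ≠ x := by
          by_contra hc
          push_neg at hc
          exact hne (Equiv.ext hc)
        have hswap : Equiv.swap x (σ x) ∈ ⨆ i ∈ α, stabS (t i) := by
          apply swap_mem_biSup
          exact (⨆ i ∈ α, t i).symm (hσ x)
        have hswap' : Equiv.swap x (σ x) ∈ stabS (⨆ i ∈ α, t i) := by
          apply swap_mem_stabS
          exact (⨆ i ∈ α, t i).symm (hσ x)
        have hτ := ih ((Equiv.swap x (σ x) * σ).support.card)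
          (hn ▸ Equiv.Perm.card_support_swap_mul hx) _
          rfl (Subgroup.mul_mem _ hswap' hσ)
        have hdecomp : σ = Equiv.swap x (σ x) * (Equiv.swap x (σ x) * σ) := by
          rw [← mul_assoc, Equiv.swap_mul_self, one_mul]
        rw [hdecomp]
        exact Subgroup.mul_mem _ hswap hτ
    exact fun σ hσ => key σ.support.card σ rfl hσ
  · apply iSup_le; intro i; apply iSup_le; intro hi
    exact stabS_mono (le_iSup_of_le i (le_iSup_of_le hi le_rfl))

lemma comap_biInf {X Y ι : Type*} (f : X → Y) (α : Finset ι) (s : ι → Setoid Y) :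
    Setoid.comap f (⨅ i ∈ α, s i) = ⨅ i ∈ α, Setoid.comap f (s i) := by
  ext x y
  rw [Setoid.comap_rel, setoid_biInf_rel, setoid_biInf_rel]
  simp only [Setoid.comap_rel]

lemma comap_biSup {X Y ι : Type*} {f : X → Y} (hf : Function.Surjective f)
    (α : Finset ι) (hα : α.Nonempty) (s : ι → Setoid Y) :
    Setoid.comap f (⨆ i ∈ α, s i) = ⨆ i ∈ α, Setoid.comap f (s i) := by
  apply le_antisymm
  · intro x y hxy
    rw [Setoid.comap_rel, setoid_biSup_eq] at hxy
    have hxy' : Relation.EqvGen (fun a b => ∃ i ∈ α, s i a b) (f x) (f y) := hxy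
    obtain ⟨i₀, hi₀⟩ := hα
    have key : ∀ a b, Relation.EqvGen (fun a b => ∃ i ∈ α, s i a b) a b →
        ∀ x y, f x = a → f y = b → (⨆ i ∈ α, Setoid.comap f (s i)) x y := by
      intro a b h
      induction h with
      | rel a b hab =>
        intro x y hx hy
        obtain ⟨i, hi, hr⟩ := hab
        have : Setoid.comap f (s i) x y := by
          rw [Setoid.comap_rel, hx, hy]; exact hr
        have hle : Setoid.comap f (s i) ≤ ⨆ i ∈ α, Setoid.comap f (s i) :=
          le_iSup_of_le i (le_iSup_of_le hi le_rfl)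
        exact hle this
      | refl a =>
        intro x y hx hy
        have : Setoid.comap f (s i₀) x y := by
          rw [Setoid.comap_rel, hx, hy]
        have hle : Setoid.comap f (s i₀) ≤ ⨆ i ∈ α, Setoid.comap f (s i) :=
          le_iSup_of_le i₀ (le_iSup_of_le hi₀ le_rfl)
        exact hle this
      | symm a b _ ih =>
        intro x y hx hy
        exact (⨆ i ∈ α, Setoid.comap f (s i)).symm (ih y x hy hx)
      | trans a b c _ _ ih1 ih2 =>
        intro x y hx hy
        obtain ⟨z, hz⟩ := hf b
        exact (⨆ i ∈ α, Setoid.comap f (s i)).trans (ih1 x z hx hz) (ih2 z y hz hy)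
    exact key _ _ hxy' x y rfl rfl
  · apply iSup_le; intro i; apply iSup_le; intro hi
    intro x y h
    rw [Setoid.comap_rel] at h ⊢
    have hle : s i ≤ ⨆ i ∈ α, s i := le_iSup_of_le i (le_iSup_of_le hi le_rfl)
    exact hle h

lemma log_ge_aux {x : ℝ} (hx : 0 < x) : 1 - 1/x ≤ Real.log x := by
  have h := Real.log_le_sub_one_of_pos (show (0:ℝ) < 1/x by positivity)
  rw [Real.log_div one_ne_zero (ne_of_gt hx), Real.log_one] at h
  linarith

lemma logfact_lb : ∀ n : ℕ, 1 ≤ n → (n : ℝ) * Real.log n - n + 1 ≤ Real.log (n.factorial) := by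
  intro n hn1'
  induction n, hn1' using Nat.le_induction with
  | base => simp
  | succ n hn ih =>
    have hn0 : (0:ℝ) < n := by exact_mod_cast hn
    have hn1 : (0:ℝ) < (n:ℝ) + 1 := by linarith
    have hfact : (0:ℝ) < (n.factorial : ℝ) := by exact_mod_cast n.factorial_pos
    have hstep : Real.log ((n+1).factorial : ℝ) = Real.log (n.factorial : ℝ) + Real.log ((n:ℝ)+1) := by
      rw [Nat.factorial_succ]
      push_cast
      rw [Real.log_mul (by linarith) (ne_of_gt hfact)]
      ring
    -- log(1+1/n) ≤ 1/n  i.e.  n * (log(n+1) - log n) ≤ 1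
    have hkey : (n:ℝ) * Real.log ((n:ℝ)+1) ≤ (n:ℝ) * Real.log n + 1 := by
      have h := Real.log_le_sub_one_of_pos (show (0:ℝ) < ((n:ℝ)+1)/n by positivity)
      rw [Real.log_div (by linarith) (ne_of_gt hn0)] at h
      have : Real.log ((n:ℝ)+1) - Real.log n ≤ 1/n := by
        calc Real.log ((n:ℝ)+1) - Real.log n ≤ ((n:ℝ)+1)/n - 1 := h
        _ = 1/n := by field_simp; ring
      calc (n:ℝ) * Real.log ((n:ℝ)+1) = (n:ℝ) * (Real.log ((n:ℝ)+1) - Real.log n) + n * Real.log n := by ring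
      _ ≤ (n:ℝ) * (1/n) + n * Real.log n := by nlinarith
      _ = (n:ℝ) * Real.log n + 1 := by field_simp; ring
    have := ih
    push_cast
    rw [hstep]
    push_cast at this
    nlinarith

lemma logfact_ub : ∀ n : ℕ, 1 ≤ n →
    Real.log (n.factorial : ℝ) ≤ (n : ℝ) * Real.log n - n + 1 + Real.log n := by
  intro n hn1'
  induction n, hn1' using Nat.le_induction with
  | base => simp
  | succ n hn ih =>
    have hn0 : (0:ℝ) < n := by exact_mod_cast hn
    have hfact : (0:ℝ) < (n.factorial : ℝ) := by exact_mod_cast n.factorial_pos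
    have hstep : Real.log ((n+1).factorial : ℝ) = Real.log (n.factorial : ℝ) + Real.log ((n:ℝ)+1) := by
      rw [Nat.factorial_succ]
      push_cast
      rw [Real.log_mul (by linarith) (ne_of_gt hfact)]
      ring
    have hkey : 1 + ((n:ℝ)+1) * Real.log n ≤ ((n:ℝ)+1) * Real.log ((n:ℝ)+1) := by
      have h := log_ge_aux (show (0:ℝ) < ((n:ℝ)+1)/n by positivity)
      rw [Real.log_div (by linarith) (ne_of_gt hn0)] at h
      have h2 : 1/((n:ℝ)+1) ≤ Real.log ((n:ℝ)+1) - Real.log n := by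
        have : 1 - 1/(((n:ℝ)+1)/n) = 1/((n:ℝ)+1) := by
          rw [one_div_div]; field_simp; ring
        linarith [this ▸ h]
      have h3 := mul_le_mul_of_nonneg_left h2 (show (0:ℝ) ≤ (n:ℝ)+1 by linarith)
      have h4 : ((n:ℝ)+1) * (1/((n:ℝ)+1)) = 1 := by field_simp
      nlinarith
    push_cast
    rw [hstep]
    push_cast at ih
    nlinarith

lemma key_bound {C : Type*} [Fintype C] (m : C → ℕ) (hm : ∀ c, 1 ≤ m c)
    (N : ℕ) (hN : N = ∑ c, m c) (hN1 : 1 ≤ N) :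
    |(1 / (N:ℝ)) * Real.log ((N.factorial : ℝ) / (∏ c, (m c).factorial : ℝ))
      - (- ∑ c, ((m c : ℝ)/N) * Real.log ((m c : ℝ)/N))|
      ≤ (Fintype.card C + 1) * (1 + Real.log N) / N := by
  have hN0 : (0:ℝ) < N := by exact_mod_cast hN1
  have hmc0 : ∀ c, (0:ℝ) < m c := fun c => by exact_mod_cast hm c
  have hmcN : ∀ c, (m c : ℝ) ≤ N := by
    intro c
    have : m c ≤ N := hN ▸ Finset.single_le_sum (fun c _ => Nat.zero_le _) (Finset.mem_univ c)
    exact_mod_cast this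
  have hlog_split : Real.log ((N.factorial : ℝ) / (∏ c, (m c).factorial : ℝ))
      = Real.log (N.factorial : ℝ) - ∑ c, Real.log ((m c).factorial : ℝ) := by
    rw [Real.log_div (by exact_mod_cast N.factorial_pos.ne') (by
      push_cast
      exact ne_of_gt (Finset.prod_pos (fun c _ => by exact_mod_cast (m c).factorial_pos)))]
    congr 1
    push_cast
    rw [Real.log_prod]
    intro c _
    exact_mod_cast (m c).factorial_pos.ne'
  set D : ℝ := Real.log (N.factorial : ℝ) - ∑ c, Real.log ((m c).factorial : ℝ) with hD
  set He : ℝ := - ∑ c, ((m c : ℝ)/N) * Real.log ((m c : ℝ)/N) with hHe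
  set k : ℕ := Fintype.card C with hk
  have hsumN : ∑ c, (m c : ℝ) = N := by
    rw [hN]; push_cast; rfl
  have hNHe : (N:ℝ) * He = (N:ℝ) * Real.log N - ∑ c, (m c : ℝ) * Real.log (m c) := by
    rw [hHe, mul_neg, Finset.mul_sum]
    have : ∀ c ∈ Finset.univ, (N:ℝ) * ((m c : ℝ)/N * Real.log ((m c:ℝ)/N))
        = (m c : ℝ) * Real.log (m c) - (m c : ℝ) * Real.log N := by
      intro c _
      rw [Real.log_div (ne_of_gt (hmc0 c)) (ne_of_gt hN0)]
      field_simp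
    rw [Finset.sum_congr rfl this, Finset.sum_sub_distrib]
    rw [← Finset.sum_mul, hsumN]
    ring
  -- upper bound for D
  have hub : D ≤ (N:ℝ) * He + 1 + Real.log N := by
    have h1 := logfact_ub N hN1
    have h2 : ∀ c ∈ Finset.univ, (m c : ℝ) * Real.log (m c) - (m c : ℝ) + 1
        ≤ Real.log ((m c).factorial : ℝ) := fun c _ => logfact_lb (m c) (hm c)
    have h3 := Finset.sum_le_sum h2
    rw [hD, hNHe]
    have h4 : ∑ c, ((m c : ℝ) * Real.log (m c) - (m c : ℝ) + 1)
        = (∑ c, (m c : ℝ) * Real.log (m c)) - N + k := by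
      rw [Finset.sum_add_distrib, Finset.sum_sub_distrib, hsumN]
      simp [hk]
    rw [h4] at h3
    have hk0 : (0:ℝ) ≤ k := by positivity
    linarith
  -- lower bound for D
  have hlb : (N:ℝ) * He - (k:ℝ) * (1 + Real.log N) ≤ D := by
    have h1 := logfact_lb N hN1
    have h2 : ∀ c ∈ Finset.univ, Real.log ((m c).factorial : ℝ)
        ≤ (m c : ℝ) * Real.log (m c) - (m c : ℝ) + 1 + Real.log N := by
      intro c _
      calc Real.log ((m c).factorial : ℝ)
          ≤ (m c : ℝ) * Real.log (m c) - (m c : ℝ) + 1 + Real.log (m c) := logfact_ub (m c) (hm c)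
        _ ≤ (m c : ℝ) * Real.log (m c) - (m c : ℝ) + 1 + Real.log N := by
            have := Real.log_le_log (hmc0 c) (hmcN c)
            linarith
    have h3 := Finset.sum_le_sum h2
    have h4 : ∑ c, ((m c : ℝ) * Real.log (m c) - (m c : ℝ) + 1 + Real.log N)
        = (∑ c, (m c : ℝ) * Real.log (m c)) - N + k * (1 + Real.log N) := by
      rw [Finset.sum_add_distrib, Finset.sum_add_distrib, Finset.sum_sub_distrib, hsumN]
      simp [hk]
      ring
    rw [h4] at h3
    rw [hD, hNHe]
    linarith
  -- combine
  have hlogN0 : 0 ≤ Real.log N := Real.log_nonneg (by exact_mod_cast hN1)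
  rw [hlog_split]
  have heq : (1/(N:ℝ)) * D - He = (D - (N:ℝ) * He) / N := by field_simp
  rw [heq, abs_div, abs_of_pos hN0]
  have hkk : (0:ℝ) ≤ (k:ℝ) := by positivity
  have habs : |D - (N:ℝ) * He| ≤ ((k:ℝ) + 1) * (1 + Real.log N) := by
    rw [abs_le]
    constructor
    · nlinarith
    · nlinarith
  calc |D - (N:ℝ)*He| / (N:ℝ) ≤ (((k:ℝ)+1) * (1 + Real.log N)) / N := by
        exact div_le_div_of_nonneg_right habs hN0.le
    _ = ((Fintype.card C : ℝ) + 1) * (1 + Real.log N) / N := by rw [hk]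


def sigmaFstFiber {ι : Type*} (β : ι → Type*) (a₀ : ι) : {x : Σ a, β a // x.1 = a₀} ≃ β a₀ where
  toFun := fun ⟨⟨a, b⟩, h⟩ => h ▸ b
  invFun := fun b => ⟨⟨a₀, b⟩, rfl⟩
  left_inv := fun ⟨⟨a, b⟩, h⟩ => by subst h; rfl
  right_inv := fun b => rfl

lemma exists_fiber_fun {Ω : Type*} [Fintype Ω] [DecidableEq Ω] (m : Ω → ℕ) (hm : ∀ ω, 1 ≤ m ω) :
    ∃ f : Fin (∑ ω, m ω) → Ω, Function.Surjective f ∧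
      ∀ ω, Fintype.card {i // f i = ω} = m ω := by
  have hcard : Fintype.card (Σ ω : Ω, Fin (m ω)) = Fintype.card (Fin (∑ ω, m ω)) := by
    simp [Fintype.card_sigma]
  let e : (Σ ω : Ω, Fin (m ω)) ≃ Fin (∑ ω, m ω) := Fintype.equivOfCardEq hcard
  refine ⟨fun i => (e.symm i).1, ?_, ?_⟩
  · intro ω
    exact ⟨e ⟨ω, ⟨0, hm ω⟩⟩, by simp⟩
  · intro ω
    have e1 : {i // (e.symm i).1 = ω} ≃ {x : Σ ω' : Ω, Fin (m ω') // x.1 = ω} :=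
      e.symm.subtypeEquiv (q := fun x => x.1 = ω) (fun i => Iff.rfl)
    rw [Fintype.card_congr e1, Fintype.card_congr (sigmaFstFiber _ ω)]
    simp

open Classical in
lemma card_stabS_comap {X Ω : Type*} [Fintype X] [Fintype Ω] (f : X → Ω) (s : Setoid Ω) :
    Nat.card (stabS (Setoid.comap f s))
      = ∏ c : Quotient s, (Fintype.card {i // (⟦f i⟧ : Quotient s) = c}).factorial := by
  classical
  have h1 : Nat.card (stabS (Setoid.comap f s))
      = Fintype.card {g : Equiv.Perm X // (fun i => (⟦f i⟧ : Quotient s)) ∘ g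
          = fun i => (⟦f i⟧ : Quotient s)} := by
    rw [← Nat.card_eq_fintype_card]
    apply Nat.card_congr
    apply Equiv.subtypeEquivRight
    intro g
    simp only [mem_stabS, Setoid.comap_rel, funext_iff, Function.comp_apply]
    constructor
    · intro h x; exact Quotient.sound (h x)
    · intro h x; exact Quotient.exact (h x)
  rw [h1, DomMulAct.stabilizer_card]

open Classical in
lemma fiber_count {X Ω : Type*} [Fintype X] [Fintype Ω] (f : X → Ω) (m : Ω → ℕ)
    (hcard : ∀ ω, Fintype.card {i // f i = ω} = m ω) (s : Setoid Ω) (c : Quotient s) :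
    Fintype.card {i // (⟦f i⟧ : Quotient s) = c}
      = ∑ ω ∈ Finset.univ.filter (fun ω => (⟦ω⟧ : Quotient s) = c), m ω := by
  classical
  rw [Fintype.card_subtype]
  rw [Finset.card_eq_sum_card_fiberwise
    (f := f) (t := Finset.univ.filter (fun ω => (⟦ω⟧ : Quotient s) = c))
    (fun i hi => by simp at hi ⊢; exact hi)]
  apply Finset.sum_congr rfl
  intro ω hω
  simp only [Finset.mem_filter, Finset.mem_univ, true_and] at hω
  rw [Finset.filter_filter]
  rw [← hcard ω, Fintype.card_subtype]
  congr 1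
  apply Finset.filter_congr
  intro i _
  constructor
  · tauto
  · intro h; exact ⟨h ▸ hω, h⟩

open Classical in
lemma master {Ω : Type*} [Fintype Ω] {N : ℕ} (hN1 : 1 ≤ N) (f : Fin N → Ω)
    (hf : Function.Surjective f) (m : Ω → ℕ)
    (hcard : ∀ ω, Fintype.card {i // f i = ω} = m ω) (s : Setoid Ω) :
    |entropy (fun ω => (m ω : ℝ)/N) s
        - (1/(N:ℝ)) * Real.log ((N.factorial : ℝ) / (Nat.card (stabS (Setoid.comap f s)) : ℝ))|
      ≤ ((Fintype.card Ω : ℝ) + 1) * (1 + Real.log N) / N := by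
  classical
  set nn : Quotient s → ℕ := fun c => Fintype.card {i // (⟦f i⟧ : Quotient s) = c} with hnn
  have h1 : ∀ c, 1 ≤ nn c := by
    intro c
    obtain ⟨ω₀, rfl⟩ := c.exists_rep
    obtain ⟨i, hi⟩ := hf ω₀
    have : Nonempty {i // (⟦f i⟧ : Quotient s) = ⟦ω₀⟧} := ⟨⟨i, by rw [hi]⟩⟩
    exact Fintype.card_pos
  have h2 : N = ∑ c, nn c := by
    have := Fintype.card_congr (Equiv.sigmaFiberEquiv (fun i : Fin N => (⟦f i⟧ : Quotient s)))
    rw [Fintype.card_sigma] at this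
    simpa using this.symm
  have h3 : (Nat.card (stabS (Setoid.comap f s)) : ℝ) = ∏ c, ((nn c).factorial : ℝ) := by
    rw [card_stabS_comap]
    push_cast
    rfl
  have h4 := key_bound nn h1 N h2 hN1
  have h5 : entropy (fun ω => (m ω : ℝ)/N) s = - ∑ c, ((nn c : ℝ)/N) * Real.log ((nn c : ℝ)/N) := by
    unfold entropy
    congr 1
    apply Finset.sum_congr rfl
    intro c _
    have hfc : nn c = ∑ ω ∈ Finset.univ.filter (fun ω => (⟦ω⟧ : Quotient s) = c), m ω :=
      fiber_count f m hcard s c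
    have hcp : classProb (fun ω => (m ω : ℝ)/N) s c = (nn c : ℝ)/N := by
      unfold classProb
      rw [hfc]
      push_cast
      rw [Finset.sum_div]
    rw [hcp]
  have h6 : (Fintype.card (Quotient s) : ℝ) ≤ (Fintype.card Ω : ℝ) := by
    exact_mod_cast Fintype.card_le_of_surjective (Quotient.mk s) (fun c => c.exists_rep)
  have hlog : (0:ℝ) ≤ 1 + Real.log N := by
    have : (0:ℝ) ≤ Real.log N := Real.log_nonneg (by exact_mod_cast hN1)
    linarith
  have hN0 : (0:ℝ) < N := by exact_mod_cast hN1
  rw [h5, abs_sub_comm, h3]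
  refine h4.trans ?_
  gcongr

open Filter Topology in
lemma tendsto_err : Tendsto (fun N : ℕ => (1 + Real.log N) / N) atTop (𝓝 0) := by
  have h1 : Tendsto (fun x : ℝ => Real.log x / x) atTop (𝓝 0) :=
    Real.isLittleO_log_id_atTop.tendsto_div_nhds_zero
  have h2 : Tendsto (fun N : ℕ => Real.log N / N) atTop (𝓝 0) :=
    h1.comp tendsto_natCast_atTop_atTop
  have h3 : Tendsto (fun N : ℕ => (1:ℝ) / N) atTop (𝓝 0) :=
    tendsto_const_div_atTop_nhds_zero_nat 1
  have := h3.add h2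
  rw [add_zero] at this
  refine this.congr (fun N => ?_)
  rw [add_div]

open Filter Topology in
lemma tendsto_ratApprox {Ω : Type*} [Fintype Ω] (p : Ω → ℝ) (hp : ∀ ω, 0 ≤ p ω)
    (hsum : ∑ ω, p ω = 1) (ω : Ω) :
    Tendsto (fun M : ℕ => ((⌈p ω * M⌉₊ + 1 : ℕ) : ℝ) / ((∑ ω' , (⌈p ω' * M⌉₊ + 1 : ℕ) : ℕ) : ℝ))
      atTop (𝓝 (p ω)) := by
  have hA : ∀ ω₀ : Ω, Tendsto (fun M : ℕ => ((⌈p ω₀ * M⌉₊ + 1 : ℕ) : ℝ) / M) atTop (𝓝 (p ω₀)) := by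
    intro ω₀
    have hub : Tendsto (fun M : ℕ => p ω₀ + 2 / M) atTop (𝓝 (p ω₀)) := by
      have := (tendsto_const_div_atTop_nhds_zero_nat 2).const_add (p ω₀)
      rwa [add_zero] at this
    apply tendsto_of_tendsto_of_tendsto_of_le_of_le' tendsto_const_nhds hub
    · filter_upwards [eventually_ge_atTop 1] with M hM
      have hM0 : (0:ℝ) < M := by exact_mod_cast hM
      rw [le_div_iff₀ hM0]
      push_cast
      have := Nat.le_ceil (p ω₀ * M)
      linarith
    · filter_upwards [eventually_ge_atTop 1] with M hM
      have hM0 : (0:ℝ) < M := by exact_mod_cast hM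
      rw [div_le_iff₀ hM0]
      push_cast
      have h2 := Nat.ceil_lt_add_one (mul_nonneg (hp ω₀) (by positivity) : (0:ℝ) ≤ p ω₀ * M)
      have h3 : ((⌈p ω₀ * M⌉₊ : ℕ) : ℝ) < p ω₀ * M + 1 := by exact_mod_cast h2
      have hexp : (p ω₀ + 2/(M:ℝ))*M = p ω₀*M + 2 := by field_simp
      linarith
  have hB : Tendsto (fun M : ℕ => ((∑ ω' , (⌈p ω' * M⌉₊ + 1 : ℕ) : ℕ) : ℝ) / M) atTop (𝓝 1) := by
    have := tendsto_finset_sum (Finset.univ : Finset Ω) (fun ω' _ => hA ω')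
    rw [hsum] at this
    refine this.congr (fun M => ?_)
    rw [← Finset.sum_div]
    push_cast
    rfl
  have hdiv := (hA ω).div hB one_ne_zero
  rw [div_one] at hdiv
  have hΩ : Nonempty Ω := by
    rcases isEmpty_or_nonempty Ω with h | h
    · exfalso; rw [Finset.univ_eq_empty, Finset.sum_empty] at hsum; simp at hsum
    · exact h
  refine hdiv.congr' ?_
  filter_upwards [eventually_ge_atTop 1] with M hM
  have hM0 : (0:ℝ) < M := by exact_mod_cast hM
  have hb : (0:ℝ) < ((∑ ω' , (⌈p ω' * M⌉₊ + 1 : ℕ) : ℕ) : ℝ) := by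
    have h5 : 0 < ∑ ω' : Ω, (⌈p ω' * (M:ℝ)⌉₊ + 1) :=
      Finset.sum_pos (fun _ _ => Nat.succ_pos _) Finset.univ_nonempty
    exact_mod_cast h5
  simp only [Pi.div_apply]
  exact div_div_div_cancel_right₀ hM0.ne' _ _

open Filter Topology in
lemma tendsto_entropy {Ω : Type*} [Fintype Ω] {q : ℕ → Ω → ℝ} {p : Ω → ℝ}
    (hq : ∀ ω, Tendsto (fun M => q M ω) atTop (𝓝 (p ω))) (s : Setoid Ω) :
    Tendsto (fun M => entropy (q M) s) atTop (𝓝 (entropy p s)) := by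
  unfold entropy
  apply Tendsto.neg
  apply tendsto_finset_sum
  intro c _
  have hclass : Tendsto (fun M => classProb (q M) s c) atTop (𝓝 (classProb p s c)) := by
    unfold classProb
    exact tendsto_finset_sum _ (fun ω _ => hq ω)
  exact (Real.continuous_mul_log.continuousAt (x := classProb p s c)).tendsto.comp hclass


open Filter Topology in
/-- Subgroup Approximation Theorem: the entropies of all joint and common
information elements generated by `s₁, …, s_n` are simultaneously approximated,
within `ε`, by the normalized log-indices of the corresponding generated
subgroups of a symmetric group `Equiv.Perm (Fin N)`. -/
theorem stmt_11 {Ω : Type*} [Fintype Ω] (p : Ω → ℝ) (hp : ∀ ω, 0 ≤ p ω)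
    (hsum : ∑ ω, p ω = 1) (n : ℕ) (s : Fin n → Setoid Ω) :
    ∀ ε : ℝ, 0 < ε →
      ∃ N : ℕ, 1 ≤ N ∧ ∃ H : Fin n → Subgroup (Equiv.Perm (Fin N)),
        ∀ α : Finset (Fin n), α.Nonempty →
          |entropy p (⨅ i ∈ α, s i) -
              (1 / (N : ℝ)) *
                Real.log ((Nat.factorial N : ℝ) / (Nat.card ↥(⨅ i ∈ α, H i) : ℝ))| < ε ∧
          |entropy p (⨆ i ∈ α, s i) -
              (1 / (N : ℝ)) *
                Real.log ((Nat.factorial N : ℝ) / (Nat.card ↥(⨆ i ∈ α, H i) : ℝ))| < ε := by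
  classical
  intro ε hε
  have hΩ : Nonempty Ω := by
    rcases isEmpty_or_nonempty Ω with h | h
    · exfalso; rw [Finset.univ_eq_empty, Finset.sum_empty] at hsum; simp at hsum
    · exact h
  set m : ℕ → Ω → ℕ := fun M ω => ⌈p ω * M⌉₊ + 1 with hm_def
  set Nf : ℕ → ℕ := fun M => ∑ ω, m M ω with hNf_def
  set q : ℕ → Ω → ℝ := fun M ω => (m M ω : ℝ) / (Nf M : ℝ) with hq_def
  have hq : ∀ ω, Tendsto (fun M => q M ω) atTop (𝓝 (p ω)) := fun ω =>
    tendsto_ratApprox p hp hsum ω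
  -- eventual entropy approximation for all relevant setoids
  have hev1 : ∀ᶠ M in atTop, ∀ α : Finset (Fin n),
      |entropy (q M) (⨅ i ∈ α, s i) - entropy p (⨅ i ∈ α, s i)| < ε/2 ∧
      |entropy (q M) (⨆ i ∈ α, s i) - entropy p (⨆ i ∈ α, s i)| < ε/2 := by
    rw [eventually_all]
    intro α
    have h1 := (tendsto_entropy hq (⨅ i ∈ α, s i)).eventually
      (eventually_abs_sub_lt (entropy p (⨅ i ∈ α, s i)) (half_pos hε))
    have h2 := (tendsto_entropy hq (⨆ i ∈ α, s i)).eventually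
      (eventually_abs_sub_lt (entropy p (⨆ i ∈ α, s i)) (half_pos hε))
    exact h1.and h2
  -- N grows at least linearly
  have hNge : ∀ M : ℕ, M ≤ Nf M := by
    intro M
    have hr : (M:ℝ) ≤ (Nf M : ℝ) := by
      calc (M:ℝ) = ∑ ω, p ω * M := by rw [← Finset.sum_mul, hsum, one_mul]
        _ ≤ ∑ ω, ((m M ω : ℕ) : ℝ) := by
            apply Finset.sum_le_sum
            intro ω _
            have := Nat.le_ceil (p ω * (M:ℝ))
            simp only [hm_def]; push_cast
            linarith
        _ = (Nf M : ℝ) := by rw [hNf_def]; push_cast; rfl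
    exact_mod_cast hr
  have hev2 : ∀ᶠ M in atTop,
      ((Fintype.card Ω : ℝ) + 1) * (1 + Real.log (Nf M)) / (Nf M) < ε/2 := by
    have hNM : Tendsto Nf atTop atTop := tendsto_atTop_mono hNge tendsto_id
    have h0 := (tendsto_err.const_mul ((Fintype.card Ω : ℝ) + 1)).comp hNM
    rw [mul_zero] at h0
    have := h0.eventually (eventually_abs_sub_lt 0 (half_pos hε))
    filter_upwards [this] with M hM
    have h1 : ((Fintype.card Ω : ℝ) + 1) * (1 + Real.log (Nf M)) / (Nf M)
        = ((Fintype.card Ω : ℝ) + 1) * ((1 + Real.log (Nf M)) / (Nf M)) := by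
      rw [mul_div_assoc]
    rw [h1]
    calc ((Fintype.card Ω : ℝ) + 1) * ((1 + Real.log (Nf M)) / (Nf M))
        ≤ |((Fintype.card Ω : ℝ) + 1) * ((1 + Real.log (Nf M)) / (Nf M)) - 0| := by
          rw [sub_zero]; exact le_abs_self _
      _ < ε/2 := hM
  obtain ⟨M, hM1, hM2, hMpos⟩ := (hev1.and (hev2.and (eventually_ge_atTop 1))).exists
  have hN1 : 1 ≤ Nf M := le_trans hMpos (hNge M)
  obtain ⟨f, hfsurj, hfcard⟩ := exists_fiber_fun (m M) (fun ω => Nat.le_add_left 1 _)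
  refine ⟨Nf M, hN1, fun i => stabS (Setoid.comap f (s i)), ?_⟩
  intro α hα
  have hinf : (⨅ i ∈ α, stabS (Setoid.comap f (s i)))
      = stabS (Setoid.comap f (⨅ i ∈ α, s i)) := by
    rw [comap_biInf, stabS_biInf]
  have hsup : (⨆ i ∈ α, stabS (Setoid.comap f (s i)))
      = stabS (Setoid.comap f (⨆ i ∈ α, s i)) := by
    rw [comap_biSup hfsurj α hα, stabS_biSup]
  constructor
  · rw [hinf]
    have hmaster := master hN1 f hfsurj (m M) hfcard (⨅ i ∈ α, s i)
    have htri := abs_sub_le (entropy p (⨅ i ∈ α, s i)) (entropy (q M) (⨅ i ∈ α, s i))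
      ((1/(Nf M : ℝ)) * Real.log ((Nat.factorial (Nf M) : ℝ)
        / (Nat.card (stabS (Setoid.comap f (⨅ i ∈ α, s i))) : ℝ)))
    have h1 : |entropy p (⨅ i ∈ α, s i) - entropy (q M) (⨅ i ∈ α, s i)| < ε/2 := by
      rw [abs_sub_comm]; exact (hM1 α).1
    have h2 := hmaster
    calc |entropy p (⨅ i ∈ α, s i) - (1/(Nf M : ℝ)) * Real.log ((Nat.factorial (Nf M) : ℝ)
          / (Nat.card (stabS (Setoid.comap f (⨅ i ∈ α, s i))) : ℝ))|
        ≤ _ + _ := htri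
      _ < ε/2 + ε/2 := by
          apply add_lt_add_of_lt_of_le h1
          exact le_trans h2 (le_of_lt hM2)
      _ = ε := by ring
  · rw [hsup]
    have hmaster := master hN1 f hfsurj (m M) hfcard (⨆ i ∈ α, s i)
    have htri := abs_sub_le (entropy p (⨆ i ∈ α, s i)) (entropy (q M) (⨆ i ∈ α, s i))
      ((1/(Nf M : ℝ)) * Real.log ((Nat.factorial (Nf M) : ℝ)
        / (Nat.card (stabS (Setoid.comap f (⨆ i ∈ α, s i))) : ℝ)))
    have h1 : |entropy p (⨆ i ∈ α, s i) - entropy (q M) (⨆ i ∈ α, s i)| < ε/2 := by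
      rw [abs_sub_comm]; exact (hM1 α).2
    calc |entropy p (⨆ i ∈ α, s i) - (1/(Nf M : ℝ)) * Real.log ((Nat.factorial (Nf M) : ℝ)
          / (Nat.card (stabS (Setoid.comap f (⨆ i ∈ α, s i))) : ℝ))|
        ≤ _ + _ := htri
      _ < ε/2 + ε/2 := by
          apply add_lt_add_of_lt_of_le h1
          exact le_trans hmaster (le_of_lt hM2)
      _ = ε := by ring
end

section
/- Let n ≥ 1 and let f : ℝ^{2(2ⁿ−1)} → ℝ be continuous, its arguments indexed by two copies of the nonempty subsets of {1, …, n}. Suppose that for every finite probability space (Ω, p) and all setoids s₁, …, s_n on Ω one has f( (H_p(⨅_{i∈α} s_i))_α , (H_p(⨆_{i∈β} s_i))_β ) ≥ 0. Then for every finite group G and all subgroups G₁, …, G_n of G one has f( (log(|G|/|⨅_{i∈α} G_i|))_α , (log(|G|/|⨆_{i∈β} G_i|))_β ) ≥ 0. -/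
lemma leftRel_mono {G : Type} [Group G] {H K : Subgroup G} (h : H ≤ K) :
    QuotientGroup.leftRel H ≤ QuotientGroup.leftRel K := by
  rw [Setoid.le_def]
  intro x y hxy
  rw [QuotientGroup.leftRel_apply] at *
  exact h hxy

lemma leftRel_iInf {G : Type} [Group G] {ι : Sort*} (H : ι → Subgroup G) :
    (⨅ i, QuotientGroup.leftRel (H i)) = QuotientGroup.leftRel (⨅ i, H i) := by
  apply le_antisymm
  · rw [Setoid.le_def]
    intro x y hxy
    rw [QuotientGroup.leftRel_apply, Subgroup.mem_iInf]
    intro i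
    have := Setoid.le_def.mp (iInf_le (fun i => QuotientGroup.leftRel (H i)) i) hxy
    rwa [QuotientGroup.leftRel_apply] at this
  · exact le_iInf fun i => leftRel_mono (iInf_le H i)

lemma leftRel_iSup {G : Type} [Group G] {ι : Sort*} (H : ι → Subgroup G) :
    (⨆ i, QuotientGroup.leftRel (H i)) = QuotientGroup.leftRel (⨆ i, H i) := by
  apply le_antisymm
  · exact iSup_le fun i => leftRel_mono (le_iSup H i)
  · rw [Setoid.le_def]
    intro x y hxy
    rw [QuotientGroup.leftRel_apply] at hxy
    have key : ∀ t ∈ ⨆ i, H i, ∀ z : G, (⨆ i, QuotientGroup.leftRel (H i)) z (z * t) := by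
      intro t ht
      refine Subgroup.iSup_induction (C := fun t => ∀ z : G,
          (⨆ i, QuotientGroup.leftRel (H i)) z (z * t)) H ht ?_ ?_ ?_
      · intro i a ha z
        exact Setoid.le_def.mp (le_iSup (fun i => QuotientGroup.leftRel (H i)) i)
          (QuotientGroup.leftRel_apply.mpr (by simpa using ha))
      · intro z; simpa using Setoid.refl' _ z
      · intro a b iha ihb z
        have h2 := ihb (z * a)
        rw [mul_assoc] at h2
        exact Setoid.trans' _ (iha z) h2
    have := key _ hxy x
    simpa using this

open Classical in
lemma classProb_leftRel {G : Type} [Group G] [Fintype G] (H : Subgroup G)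
    (c : Quotient (QuotientGroup.leftRel H)) :
    classProb (fun _ : G => (Fintype.card G : ℝ)⁻¹) (QuotientGroup.leftRel H) c
      = (Nat.card H : ℝ) / (Nat.card G : ℝ) := by
  induction c using Quotient.inductionOn with
  | h g =>
    rw [classProb, Finset.sum_const]
    have hcard : (Finset.univ.filter
        (fun ω => (⟦ω⟧ : Quotient (QuotientGroup.leftRel H)) = ⟦g⟧)).card
        = Nat.card H := by
      rw [← Fintype.card_subtype, Nat.card_eq_fintype_card]
      have e : ↥H ≃ {x : G // (⟦x⟧ : Quotient (QuotientGroup.leftRel H)) = ⟦g⟧} :=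
        { toFun := fun h => ⟨g * h.1, Quotient.sound (Setoid.symm' _
            (QuotientGroup.leftRel_apply.mpr (by simpa using h.2)))⟩
          invFun := fun ω => ⟨g⁻¹ * ω.1,
            QuotientGroup.leftRel_apply.mp (Setoid.symm' _ (Quotient.exact ω.2))⟩
          left_inv := fun h => by ext; simp
          right_inv := fun ω => by ext; simp }
      exact (Fintype.card_congr e).symm
    rw [Finset.filter_congr_decidable, hcard]
    simp only [Nat.card_eq_fintype_card, nsmul_eq_mul]
    field_simp

open Classical in
lemma entropy_leftRel {G : Type} [Group G] [Fintype G] (H : Subgroup G) :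
    entropy (fun _ : G => (Fintype.card G : ℝ)⁻¹) (QuotientGroup.leftRel H)
      = Real.log ((Nat.card G : ℝ) / (Nat.card H : ℝ)) := by
  have hg : (0:ℝ) < (Nat.card G : ℝ) := by
    exact_mod_cast Nat.card_pos
  have hh : (0:ℝ) < (Nat.card H : ℝ) := by
    exact_mod_cast Nat.card_pos
  have hcard : (Nat.card G : ℝ)
      = (Fintype.card (Quotient (QuotientGroup.leftRel H)) : ℝ) * (Nat.card H : ℝ) := by
    have h1 : Nat.card G = Nat.card (G ⧸ H) * Nat.card H :=
      Subgroup.card_eq_card_quotient_mul_card_subgroup H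
    have h2 : Nat.card (G ⧸ H) = Fintype.card (Quotient (QuotientGroup.leftRel H)) := by
      rw [Nat.card_eq_fintype_card]
      exact congrArg (@Fintype.card _) (Subsingleton.elim _ _)
    rw [h1, h2]
    push_cast
    ring
  rw [entropy]
  rw [Finset.sum_congr rfl (fun c _ => by rw [classProb_leftRel])]
  rw [Finset.sum_const, show ∀ inst, (@Finset.univ (Quotient (QuotientGroup.leftRel H)) inst).card
      = Fintype.card (Quotient (QuotientGroup.leftRel H)) from
      fun inst => (@Finset.card_univ _ inst).trans (by convert rfl), nsmul_eq_mul]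
  set q := (Fintype.card (Quotient (QuotientGroup.leftRel H)) : ℝ)
  have h1 : q * ((Nat.card H : ℝ) / (Nat.card G : ℝ)) = 1 := by
    rw [hcard, mul_div_assoc', div_self (by rw [← hcard]; exact hg.ne')]
  rw [← mul_assoc, h1, one_mul, ← Real.log_inv, inv_div]

/-- If a continuous law holds for the entropies of all joint and common
information elements of any `n` information elements, then the same law holds
for the log-indices of intersections and joins of any `n` subgroups of any
finite group. -/
theorem stmt_12 (n : ℕ) (hn : 1 ≤ n)
    (f : (({α : Finset (Fin n) // α.Nonempty} ⊕ {α : Finset (Fin n) // α.Nonempty}) → ℝ) → ℝ)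
    (hf : Continuous f)
    (hlaw : ∀ (Ω : Type) [Fintype Ω] (p : Ω → ℝ),
      (∀ ω, 0 ≤ p ω) → ∑ ω, p ω = 1 →
      ∀ s : Fin n → Setoid Ω,
        0 ≤ f (Sum.elim
          (fun α => entropy p (⨅ i ∈ α.1, s i))
          (fun β => entropy p (⨆ i ∈ β.1, s i)))) :
    ∀ (G : Type) [Group G] [Fintype G] (Gs : Fin n → Subgroup G),
      0 ≤ f (Sum.elim
        (fun α => Real.log ((Nat.card G : ℝ) / (Nat.card ↥(⨅ i ∈ α.1, Gs i) : ℝ)))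
        (fun β => Real.log ((Nat.card G : ℝ) / (Nat.card ↥(⨆ i ∈ β.1, Gs i) : ℝ)))) := by
  intro G _ _ Gs
  classical
  have hcard0 : (Fintype.card G : ℝ) ≠ 0 := by exact_mod_cast Fintype.card_pos.ne'
  have key := hlaw G (fun _ => (Fintype.card G : ℝ)⁻¹) (fun ω => by positivity)
    (by rw [Finset.sum_const, Finset.card_univ, nsmul_eq_mul, mul_inv_cancel₀ hcard0])
    (fun i => QuotientGroup.leftRel (Gs i))
  have harg : (Sum.elim
        (fun α : {α : Finset (Fin n) // α.Nonempty} =>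
          entropy (fun _ : G => (Fintype.card G : ℝ)⁻¹)
            (⨅ i ∈ α.1, QuotientGroup.leftRel (Gs i)))
        (fun β : {α : Finset (Fin n) // α.Nonempty} =>
          entropy (fun _ : G => (Fintype.card G : ℝ)⁻¹)
            (⨆ i ∈ β.1, QuotientGroup.leftRel (Gs i))))
      = (Sum.elim
        (fun α : {α : Finset (Fin n) // α.Nonempty} =>
          Real.log ((Nat.card G : ℝ) / (Nat.card ↥(⨅ i ∈ α.1, Gs i) : ℝ)))
        (fun β : {α : Finset (Fin n) // α.Nonempty} =>
          Real.log ((Nat.card G : ℝ) / (Nat.card ↥(⨆ i ∈ β.1, Gs i) : ℝ)))) := by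
    funext x
    cases x with
    | inl α =>
      simp only [Sum.elim_inl]
      rw [show (⨅ i ∈ α.1, QuotientGroup.leftRel (Gs i))
          = QuotientGroup.leftRel (⨅ i ∈ α.1, Gs i) by simp_rw [leftRel_iInf]]
      exact entropy_leftRel _
    | inr β =>
      simp only [Sum.elim_inr]
      rw [show (⨆ i ∈ β.1, QuotientGroup.leftRel (Gs i))
          = QuotientGroup.leftRel (⨆ i ∈ β.1, Gs i) by simp_rw [leftRel_iSup]]
      exact entropy_leftRel _
  exact harg ▸ key
end

section
/- Common information does not obey the supermodularity law: there exist a finite probability space (Ω, p) and setoids s₁, s₂, s₃ on Ω such that H_p(s₁ ⊔ s₂) + H_p(s₂ ⊔ s₃) > H_p(s₁ ⊔ s₂ ⊔ s₃) + H_p(s₂). -/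
/- ### Auxiliary material -/

set_option linter.deprecated false

noncomputable def auxS1 : Setoid (Fin 3) := Setoid.ker (fun ω => ω == 0)
noncomputable def auxS3 : Setoid (Fin 3) := Setoid.ker (fun ω => ω == 2)

lemma auxS1_rel_iff (x y : Fin 3) : auxS1 x y ↔ (x == 0) = (y == 0) := Iff.rfl
lemma auxS3_rel_iff (x y : Fin 3) : auxS3 x y ↔ (x == 2) = (y == 2) := Iff.rfl

lemma aux_top : auxS1 ⊔ auxS3 = ⊤ := by
  rw [eq_top_iff]
  have hle1 : auxS1 ≤ auxS1 ⊔ auxS3 := le_sup_left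
  have hle3 : auxS3 ≤ auxS1 ⊔ auxS3 := le_sup_right
  rw [Setoid.le_def] at hle1 hle3
  have key : ∀ x : Fin 3, (auxS1 ⊔ auxS3) x 1 := by
    intro x
    fin_cases x
    · exact hle3 ((auxS3_rel_iff 0 1).mpr (by decide))
    · exact (auxS1 ⊔ auxS3).refl 1
    · exact hle1 ((auxS1_rel_iff 2 1).mpr (by decide))
  intro x y _
  exact (auxS1 ⊔ auxS3).trans (key x) ((auxS1 ⊔ auxS3).symm (key y))

open Classical in
lemma aux_classProb (p : Fin 3 → ℝ) (s : Setoid (Fin 3)) (c : Quotient s) :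
    classProb p s c = (if (⟦0⟧ : Quotient s) = c then p 0 else 0)
      + (if (⟦1⟧ : Quotient s) = c then p 1 else 0)
      + (if (⟦2⟧ : Quotient s) = c then p 2 else 0) := by
  rw [classProb, Finset.sum_filter, Fin.sum_univ_three]

open Classical in
lemma aux_sum_quot (s : Setoid (Fin 3)) (g : Quotient s → ℝ) (R : Finset (Fin 3))
    (hcov : ∀ ω : Fin 3, ∃ r ∈ R, s ω r)
    (hinj : ∀ x ∈ R, ∀ y ∈ R, s x y → x = y) :
    ∑ c : Quotient s, g c = ∑ r ∈ R, g (⟦r⟧ : Quotient s) := by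
  have huniv : (Finset.univ : Finset (Quotient s)) = R.image (fun r => (⟦r⟧ : Quotient s)) := by
    ext c
    induction c using Quotient.ind with
    | _ ω =>
      simp only [Finset.mem_univ, Finset.mem_image, true_iff]
      obtain ⟨r, hr, hrel⟩ := hcov ω
      exact ⟨r, hr, (Quotient.sound hrel).symm⟩
  rw [huniv, Finset.sum_image]
  intro x hx y hy h
  exact hinj x hx y hy (Quotient.exact h)

noncomputable def auxP : Fin 3 → ℝ := fun _ => 1/3

lemma aux_cp_s1_0 : classProb auxP auxS1 ⟦0⟧ = 1/3 := by
  rw [aux_classProb]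
  rw [if_pos rfl,
    if_neg (fun h => by have := (auxS1_rel_iff 1 0).mp (Quotient.exact h); simp at this),
    if_neg (fun h => by have := (auxS1_rel_iff 2 0).mp (Quotient.exact h); simp at this)]
  show auxP 0 + 0 + 0 = 1/3
  simp [auxP]

lemma aux_cp_s1_1 : classProb auxP auxS1 (⟦1⟧ : Quotient auxS1) = 2/3 := by
  rw [aux_classProb]
  rw [if_neg (fun h => by have := (auxS1_rel_iff 0 1).mp (Quotient.exact h); simp at this),
    if_pos rfl,
    if_pos (Quotient.sound ((auxS1_rel_iff 2 1).mpr (by decide)))]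
  show 0 + auxP 1 + auxP 2 = 2/3
  simp [auxP]; norm_num

lemma aux_cp_s3_2 : classProb auxP auxS3 ⟦2⟧ = 1/3 := by
  rw [aux_classProb]
  rw [if_neg (fun h => by have := (auxS3_rel_iff 0 2).mp (Quotient.exact h); simp at this),
    if_neg (fun h => by have := (auxS3_rel_iff 1 2).mp (Quotient.exact h); simp at this),
    if_pos rfl]
  show 0 + 0 + auxP 2 = 1/3
  simp [auxP]

lemma aux_cp_s3_0 : classProb auxP auxS3 (⟦0⟧ : Quotient auxS3) = 2/3 := by
  rw [aux_classProb]
  rw [if_pos rfl,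
    if_pos (Quotient.sound ((auxS3_rel_iff 1 0).mpr (by decide))),
    if_neg (fun h => by have := (auxS3_rel_iff 2 0).mp (Quotient.exact h); simp at this)]
  show auxP 0 + auxP 1 + 0 = 2/3
  simp [auxP]; norm_num

lemma aux_cp_bot (i : Fin 3) : classProb auxP (⊥ : Setoid (Fin 3)) ⟦i⟧ = 1/3 := by
  rw [aux_classProb]
  have hiff : ∀ j : Fin 3, ((⟦j⟧ : Quotient (⊥ : Setoid (Fin 3))) = ⟦i⟧) ↔ j = i := by
    intro j
    constructor
    · intro h
      have := Quotient.exact h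
      exact this
    · rintro rfl; rfl
  fin_cases i <;> simp only [hiff]
  · rw [if_pos (by decide), if_neg (by decide), if_neg (by decide)]; norm_num [auxP]
  · rw [if_neg (by decide), if_pos (by decide), if_neg (by decide)]; norm_num [auxP]
  · rw [if_neg (by decide), if_neg (by decide), if_pos (by decide)]; norm_num [auxP]

lemma aux_cp_top : classProb auxP (⊤ : Setoid (Fin 3)) ⟦0⟧ = 1 := by
  rw [aux_classProb]
  rw [if_pos rfl, if_pos (Quotient.sound trivial), if_pos (Quotient.sound trivial)]
  show auxP 0 + auxP 1 + auxP 2 = 1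
  norm_num [auxP]

lemma aux_entropy_s1 :
    entropy auxP auxS1 = -(1/3 * Real.log (1/3) + 2/3 * Real.log (2/3)) := by
  rw [entropy, aux_sum_quot auxS1 _ ({0, 1} : Finset (Fin 3))
    (by intro ω; fin_cases ω
        · exact ⟨0, by simp, auxS1.refl 0⟩
        · exact ⟨1, by simp, auxS1.refl 1⟩
        · exact ⟨1, by simp, (auxS1_rel_iff 2 1).mpr (by decide)⟩)
    (by intro x hx y hy h
        fin_cases hx <;> fin_cases hy <;>
          first | rfl | (exact absurd ((auxS1_rel_iff _ _).mp h) (by decide)))]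
  rw [Finset.sum_pair (by decide : (0 : Fin 3) ≠ 1), aux_cp_s1_0, aux_cp_s1_1]

lemma aux_entropy_s3 :
    entropy auxP auxS3 = -(1/3 * Real.log (1/3) + 2/3 * Real.log (2/3)) := by
  rw [entropy, aux_sum_quot auxS3 _ ({2, 0} : Finset (Fin 3))
    (by intro ω; fin_cases ω
        · exact ⟨0, by simp, auxS3.refl 0⟩
        · exact ⟨0, by simp, (auxS3_rel_iff 1 0).mpr (by decide)⟩
        · exact ⟨2, by simp, auxS3.refl 2⟩)
    (by intro x hx y hy h
        fin_cases hx <;> fin_cases hy <;>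
          first | rfl | (exact absurd ((auxS3_rel_iff _ _).mp h) (by decide)))]
  rw [Finset.sum_pair (by decide : (2 : Fin 3) ≠ 0), aux_cp_s3_2, aux_cp_s3_0]

lemma aux_entropy_bot :
    entropy auxP (⊥ : Setoid (Fin 3)) = -(3 * (1/3 * Real.log (1/3))) := by
  rw [entropy, aux_sum_quot (⊥ : Setoid (Fin 3)) _ (Finset.univ : Finset (Fin 3))
    (by intro ω; exact ⟨ω, Finset.mem_univ ω, rfl⟩)
    (by intro x _ y _ h; exact h)]
  rw [Fin.sum_univ_three, aux_cp_bot, aux_cp_bot, aux_cp_bot]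
  ring

lemma aux_entropy_top :
    entropy auxP (⊤ : Setoid (Fin 3)) = 0 := by
  rw [entropy, aux_sum_quot (⊤ : Setoid (Fin 3)) _ ({0} : Finset (Fin 3))
    (by intro ω; exact ⟨0, by simp, trivial⟩)
    (by intro x hx y hy _; fin_cases hx; fin_cases hy; rfl)]
  rw [Finset.sum_singleton, aux_cp_top]
  simp

/-- Common information does not obey the supermodularity law. -/
theorem stmt_16 :
    ∃ (Ω : Type) (inst : Fintype Ω) (p : Ω → ℝ) (s₁ s₂ s₃ : Setoid Ω),
      (∀ ω, 0 ≤ p ω) ∧ (@Finset.univ Ω inst).sum p = 1 ∧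
      @entropy Ω inst p (s₁ ⊔ s₂) + @entropy Ω inst p (s₂ ⊔ s₃) >
        @entropy Ω inst p (s₁ ⊔ s₂ ⊔ s₃) + @entropy Ω inst p s₂ := by
  refine ⟨Fin 3, inferInstance, auxP, auxS1, ⊥, auxS3, ?_, ?_, ?_⟩
  · intro ω; norm_num [auxP]
  · rw [Fin.sum_univ_three]; norm_num [auxP]
  · rw [sup_bot_eq, bot_sup_eq, aux_top, aux_entropy_s1, aux_entropy_s3,
      aux_entropy_bot, aux_entropy_top]
    have h1 : Real.log (1/3 : ℝ) = -Real.log 3 := by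
      rw [one_div, Real.log_inv]
    have h2 : Real.log (2/3 : ℝ) = Real.log 2 - Real.log 3 := by
      rw [Real.log_div (by norm_num) (by norm_num)]
    have hlt : Real.log 16 < Real.log 27 := Real.log_lt_log (by norm_num) (by norm_num)
    have h16 : Real.log (16 : ℝ) = 4 * Real.log 2 := by
      rw [show (16:ℝ) = 2^4 by norm_num, Real.log_pow]; push_cast; ring
    have h27 : Real.log (27 : ℝ) = 3 * Real.log 3 := by
      rw [show (27:ℝ) = 3^3 by norm_num, Real.log_pow]; push_cast; ring
    rw [h16, h27] at hlt
    rw [h1, h2]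
    linarith
end

section
/- (Gács–Körner.) For any finite probability space (Ω, p) and any setoids s₁, s₂ on Ω, the entropy of the common information is at most the mutual information: H_p(s₁ ⊔ s₂) ≤ H_p(s₁) + H_p(s₂) − H_p(s₁ ⊓ s₂). -/
section GKAux

open Classical

variable {Ω : Type*} [Fintype Ω]

/-- The canonical map from a finer quotient to a coarser one. -/
def qmap {s t : Setoid Ω} (h : s ≤ t) : Quotient s → Quotient t :=
  Quotient.lift (fun ω => (⟦ω⟧ : Quotient t)) (fun _ _ hab => Quotient.sound (h hab))

@[simp] lemma qmap_mk {s t : Setoid Ω} (h : s ≤ t) (ω : Ω) :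
    qmap h (⟦ω⟧ : Quotient s) = (⟦ω⟧ : Quotient t) := rfl

open Classical in
lemma sum_classProb_mul (p : Ω → ℝ) (s : Setoid Ω) (G : Quotient s → ℝ) :
    ∑ c : Quotient s, classProb p s c * G c = ∑ ω, p ω * G ⟦ω⟧ := by
  classical
  unfold classProb
  rw [← Finset.sum_fiberwise Finset.univ (fun ω => (⟦ω⟧ : Quotient s))
      (fun ω => p ω * G ⟦ω⟧)]
  refine Finset.sum_congr rfl fun c _ => ?_
  rw [Finset.sum_mul]
  refine Finset.sum_congr rfl fun ω hω => ?_
  rw [(Finset.mem_filter.mp hω).2]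

open Classical in
lemma sum_classProb_comp (p : Ω → ℝ) {s t : Setoid Ω} (h : s ≤ t) (G : Quotient t → ℝ) :
    ∑ d : Quotient t, classProb p t d * G d
      = ∑ c : Quotient s, classProb p s c * G (qmap h c) := by
  rw [sum_classProb_mul, sum_classProb_mul p s (fun c => G (qmap h c))]
  simp

open Classical in
lemma sum_classProb (p : Ω → ℝ) (hsum : ∑ ω, p ω = 1) (s : Setoid Ω) :
    ∑ c : Quotient s, classProb p s c = 1 := by
  have := sum_classProb_mul p s (fun _ => 1)
  simpa [hsum] using this

open Classical in
lemma classProb_nonneg {p : Ω → ℝ} (hp : ∀ ω, 0 ≤ p ω) (s : Setoid Ω) (c : Quotient s) :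
    0 ≤ classProb p s c :=
  Finset.sum_nonneg fun ω _ => hp ω

open Classical in
lemma classProb_le {p : Ω → ℝ} (hp : ∀ ω, 0 ≤ p ω) {s t : Setoid Ω} (h : s ≤ t)
    (c : Quotient s) : classProb p s c ≤ classProb p t (qmap h c) := by
  obtain ⟨ω₀, rfl⟩ := Quotient.exists_rep c
  rw [qmap_mk]
  unfold classProb
  refine Finset.sum_le_sum_of_subset_of_nonneg ?_ (fun ω _ _ => hp ω)
  intro ω hω
  simp only [Finset.mem_filter, Finset.mem_univ, true_and] at hω ⊢
  exact Quotient.sound (h (Quotient.exact hω))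

open Classical in
/-- The fiber decomposition of a class probability of a coarser setoid. -/
lemma classProb_fiber (p : Ω → ℝ) {s t : Setoid Ω} (h : s ≤ t) (d : Quotient t) :
    classProb p t d
      = ∑ c ∈ Finset.univ.filter (fun c : Quotient s => qmap h c = d), classProb p s c := by
  classical
  unfold classProb
  rw [Finset.sum_fiberwise_eq_sum_filter Finset.univ
      (Finset.univ.filter (fun c : Quotient s => qmap h c = d))
      (fun ω => (⟦ω⟧ : Quotient s)) p]
  refine Finset.sum_congr ?_ fun _ _ => rfl
  ext ω
  simp

lemma qmap_pair_inj (s₁ s₂ : Setoid Ω) (c c' : Quotient (s₁ ⊓ s₂))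
    (h1 : qmap inf_le_left c = qmap inf_le_left c')
    (h2 : qmap inf_le_right c = qmap inf_le_right c') : c = c' := by
  obtain ⟨ω, rfl⟩ := Quotient.exists_rep c
  obtain ⟨ω', rfl⟩ := Quotient.exists_rep c'
  rw [qmap_mk, qmap_mk] at h1 h2
  exact Quotient.sound ⟨Quotient.exact h1, Quotient.exact h2⟩

lemma qmap_comp {s t u : Setoid Ω} (hst : s ≤ t) (htu : t ≤ u) (c : Quotient s) :
    qmap htu (qmap hst c) = qmap (hst.trans htu) c := by
  obtain ⟨ω, rfl⟩ := Quotient.exists_rep c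
  rfl

end GKAux

open Classical in
/-- Gács–Körner: the entropy of the common information is at most the mutual
information. -/
theorem stmt_18 {Ω : Type*} [Fintype Ω] (p : Ω → ℝ) (hp : ∀ ω, 0 ≤ p ω)
    (hsum : ∑ ω, p ω = 1) (s₁ s₂ : Setoid Ω) :
    entropy p (s₁ ⊔ s₂) ≤ entropy p s₁ + entropy p s₂ - entropy p (s₁ ⊓ s₂) := by
  classical
  set m : Setoid Ω := s₁ ⊓ s₂ with hm
  set t : Setoid Ω := s₁ ⊔ s₂ with ht
  have hm1 : m ≤ s₁ := inf_le_left
  have hm2 : m ≤ s₂ := inf_le_right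
  have h1t : s₁ ≤ t := le_sup_left
  have h2t : s₂ ≤ t := le_sup_right
  have hmt : m ≤ t := hm1.trans h1t
  set q : Quotient m → ℝ := classProb p m with hq
  set P : Quotient t → ℝ := classProb p t with hP
  set P₁ : Quotient s₁ → ℝ := classProb p s₁ with hP₁
  set P₂ : Quotient s₂ → ℝ := classProb p s₂ with hP₂
  set f₁ : Quotient m → Quotient s₁ := qmap hm1 with hf₁
  set f₂ : Quotient m → Quotient s₂ := qmap hm2 with hf₂
  set g : Quotient m → Quotient t := qmap hmt with hg
  -- the "ratio" function
  set r : Quotient m → ℝ := fun c => P₁ (f₁ c) * P₂ (f₂ c) / P (g c) with hr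
  have hrnn : ∀ c, 0 ≤ r c := fun c =>
    div_nonneg (mul_nonneg (classProb_nonneg hp _ _) (classProb_nonneg hp _ _))
      (classProb_nonneg hp _ _)
  -- sum of r is at most 1
  have hsumr : ∑ c : Quotient m, r c ≤ 1 := by
    rw [← Finset.sum_fiberwise Finset.univ g r]
    have hbound : ∀ d : Quotient t,
        ∑ c ∈ Finset.univ.filter (fun c => g c = d), r c ≤ P d := by
      intro d
      have hrw : ∑ c ∈ Finset.univ.filter (fun c => g c = d), r c
          = ∑ c ∈ Finset.univ.filter (fun c => g c = d), P₁ (f₁ c) * P₂ (f₂ c) / P d := by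
        refine Finset.sum_congr rfl fun c hc => ?_
        show P₁ (f₁ c) * P₂ (f₂ c) / P (g c) = _
        rw [(Finset.mem_filter.mp hc).2]
      rw [hrw]
      by_cases hd : P d = 0
      · simp [hd]
      · have hdpos : 0 < P d :=
          lt_of_le_of_ne (classProb_nonneg hp _ _) (Ne.symm hd)
        rw [← Finset.sum_div, div_le_iff₀ hdpos]
        -- key combinatorial bound
        have hinj : ∀ x ∈ Finset.univ.filter (fun c => g c = d),
            ∀ y ∈ Finset.univ.filter (fun c => g c = d),
            (fun c => (f₁ c, f₂ c)) x = (fun c => (f₁ c, f₂ c)) y → x = y := by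
          intro x _ y _ hxy
          exact qmap_pair_inj s₁ s₂ x y (congrArg Prod.fst hxy) (congrArg Prod.snd hxy)
        have himg : ∑ c ∈ Finset.univ.filter (fun c => g c = d), P₁ (f₁ c) * P₂ (f₂ c)
            = ∑ ab ∈ (Finset.univ.filter (fun c => g c = d)).image
                (fun c => (f₁ c, f₂ c)), P₁ ab.1 * P₂ ab.2 :=
          (Finset.sum_image (f := fun ab : Quotient s₁ × Quotient s₂ => P₁ ab.1 * P₂ ab.2) hinj).symm
        rw [himg]
        have hsubset : (Finset.univ.filter (fun c => g c = d)).image (fun c => (f₁ c, f₂ c))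
            ⊆ (Finset.univ.filter (fun a : Quotient s₁ => qmap h1t a = d)) ×ˢ
              (Finset.univ.filter (fun b : Quotient s₂ => qmap h2t b = d)) := by
          intro ab hab
          obtain ⟨c, hc, rfl⟩ := Finset.mem_image.mp hab
          have hcd : g c = d := (Finset.mem_filter.mp hc).2
          rw [Finset.mem_product]
          constructor
          · simp only [Finset.mem_filter, Finset.mem_univ, true_and]
            rw [hf₁, qmap_comp hm1 h1t c, ← hcd, hg]
          · simp only [Finset.mem_filter, Finset.mem_univ, true_and]
            rw [hf₂, qmap_comp hm2 h2t c, ← hcd, hg]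
        have hle : ∑ ab ∈ (Finset.univ.filter (fun c => g c = d)).image
              (fun c => (f₁ c, f₂ c)), P₁ ab.1 * P₂ ab.2
            ≤ ∑ ab ∈ (Finset.univ.filter (fun a : Quotient s₁ => qmap h1t a = d)) ×ˢ
                (Finset.univ.filter (fun b : Quotient s₂ => qmap h2t b = d)),
                P₁ ab.1 * P₂ ab.2 :=
          Finset.sum_le_sum_of_subset_of_nonneg hsubset fun ab _ _ =>
            mul_nonneg (classProb_nonneg hp _ _) (classProb_nonneg hp _ _)
        refine hle.trans ?_
        rw [Finset.sum_product]
        have : ∑ a ∈ Finset.univ.filter (fun a : Quotient s₁ => qmap h1t a = d),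
            ∑ b ∈ Finset.univ.filter (fun b : Quotient s₂ => qmap h2t b = d),
            P₁ a * P₂ b
            = (∑ a ∈ Finset.univ.filter (fun a : Quotient s₁ => qmap h1t a = d), P₁ a) *
              (∑ b ∈ Finset.univ.filter (fun b : Quotient s₂ => qmap h2t b = d), P₂ b) := by
          rw [Finset.sum_mul]
          refine Finset.sum_congr rfl fun a _ => ?_
          rw [Finset.mul_sum]
        rw [this, ← classProb_fiber p h1t d, ← classProb_fiber p h2t d]
    calc ∑ d : Quotient t, ∑ c ∈ Finset.univ.filter (fun c => g c = d), r c
        ≤ ∑ d : Quotient t, P d := Finset.sum_le_sum fun d _ => hbound d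
      _ = 1 := sum_classProb p hsum t
  -- termwise Gibbs bound
  have hterm : ∀ c : Quotient m,
      q c * (Real.log (P₁ (f₁ c)) + Real.log (P₂ (f₂ c))
        - Real.log (P (g c)) - Real.log (q c)) ≤ r c - q c := by
    intro c
    by_cases hqc : q c = 0
    · rw [hqc]
      simpa using hrnn c
    · have hq0 : 0 < q c := lt_of_le_of_ne (classProb_nonneg hp _ _) (Ne.symm hqc)
      have h1 : 0 < P₁ (f₁ c) := lt_of_lt_of_le hq0 (classProb_le hp hm1 c)
      have h2 : 0 < P₂ (f₂ c) := lt_of_lt_of_le hq0 (classProb_le hp hm2 c)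
      have h3 : 0 < P (g c) := lt_of_lt_of_le hq0 (classProb_le hp hmt c)
      have hrpos : 0 < r c := div_pos (mul_pos h1 h2) h3
      have hlog : Real.log (P₁ (f₁ c)) + Real.log (P₂ (f₂ c))
          - Real.log (P (g c)) - Real.log (q c) = Real.log (r c / q c) := by
        rw [Real.log_div hrpos.ne' hqc, hr]
        rw [Real.log_div (mul_pos h1 h2).ne' h3.ne', Real.log_mul h1.ne' h2.ne']
      rw [hlog]
      have hl := Real.log_le_sub_one_of_pos (div_pos hrpos hq0)
      calc q c * Real.log (r c / q c) ≤ q c * (r c / q c - 1) := by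
            exact mul_le_mul_of_nonneg_left hl hq0.le
        _ = r c - q c := by field_simp
  -- assemble
  have e1 : entropy p s₁ = -∑ c : Quotient m, q c * Real.log (P₁ (f₁ c)) := by
    rw [entropy, sum_classProb_comp p hm1]
  have e2 : entropy p s₂ = -∑ c : Quotient m, q c * Real.log (P₂ (f₂ c)) := by
    rw [entropy, sum_classProb_comp p hm2]
  have et : entropy p t = -∑ c : Quotient m, q c * Real.log (P (g c)) := by
    rw [entropy, sum_classProb_comp p hmt]
  have em : entropy p m = -∑ c : Quotient m, q c * Real.log (q c) := rfl
  have hsumq : ∑ c : Quotient m, q c = 1 := sum_classProb p hsum m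
  have key : ∑ c : Quotient m, q c * (Real.log (P₁ (f₁ c)) + Real.log (P₂ (f₂ c))
      - Real.log (P (g c)) - Real.log (q c)) ≤ 0 := by
    calc ∑ c : Quotient m, q c * (Real.log (P₁ (f₁ c)) + Real.log (P₂ (f₂ c))
          - Real.log (P (g c)) - Real.log (q c))
        ≤ ∑ c : Quotient m, (r c - q c) := Finset.sum_le_sum fun c _ => hterm c
      _ = (∑ c : Quotient m, r c) - ∑ c : Quotient m, q c := Finset.sum_sub_distrib _ _
      _ ≤ 1 - 1 := by rw [hsumq]; linarith [hsumr]
      _ = 0 := by norm_num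
  have expand : ∑ c : Quotient m, q c * (Real.log (P₁ (f₁ c)) + Real.log (P₂ (f₂ c))
      - Real.log (P (g c)) - Real.log (q c))
      = (∑ c : Quotient m, q c * Real.log (P₁ (f₁ c)))
        + (∑ c : Quotient m, q c * Real.log (P₂ (f₂ c)))
        - (∑ c : Quotient m, q c * Real.log (P (g c)))
        - (∑ c : Quotient m, q c * Real.log (q c)) := by
    simp only [mul_add, mul_sub, Finset.sum_add_distrib, Finset.sum_sub_distrib]
  rw [expand] at key
  rw [e1, e2, et, em]
  linarith
end

section
/- (Zhang–Yeung inequality.) For any finite probability space (Ω, p) and any setoids s₁, s₂, s₃, s₄ on Ω, writing h(α) := H_p(⨅_{i∈α} s_i) for α ⊆ {1,2,3,4}, the following inequality holds: 3·h({1,3}) + 3·h({1,4}) + h({2,3}) + h({2,4}) + 3·h({3,4}) ≥ h({1}) + 2·h({3}) + 2·h({4}) + h({1,2}) + 4·h({1,3,4}) + h({2,3,4}). -/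
set_option linter.unusedSectionVars false
set_option maxHeartbeats 1000000


open Classical in
noncomputable def pr {Ω S : Type*} [Fintype Ω] (p : Ω → ℝ) (f : Ω → S) (y : S) : ℝ :=
  ∑ ω, if f ω = y then p ω else 0

open Classical in
noncomputable def ent {Ω S : Type*} [Fintype Ω] [Fintype S] (p : Ω → ℝ) (f : Ω → S) : ℝ :=
  -∑ y, pr p f y * Real.log (pr p f y)

section basic
open Classical
variable {Ω S T : Type*} [Fintype Ω] (p : Ω → ℝ)

lemma pr_nonneg (hp : ∀ ω, 0 ≤ p ω) (f : Ω → S) (y : S) : 0 ≤ pr p f y := by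
  apply Finset.sum_nonneg; intro ω _; split <;> simp [hp ω]

lemma pr_sum [Fintype S] (f : Ω → S) : ∑ y, pr p f y = ∑ ω, p ω := by
  unfold pr; rw [Finset.sum_comm]
  exact Finset.sum_congr rfl fun ω _ => by simp

lemma pr_eq_zero_of_ne (f : Ω → S) {y : S} (h : ∀ ω, p ω ≠ 0 → f ω ≠ y) :
    pr p f y = 0 := by
  apply Finset.sum_eq_zero; intro ω _
  by_cases hω : p ω = 0 <;> simp [hω, h ω, hω]

/-- entropy depends only on the fibers over the support. -/
lemma ent_ker_congr [Fintype S] [Fintype T] {f : Ω → S} {g : Ω → T}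
    (h : ∀ a, p a ≠ 0 → ∀ b, p b ≠ 0 → (f a = f b ↔ g a = g b)) :
    ent p f = ent p g := by
  cases isEmpty_or_nonempty Ω with
  | inl hΩ => simp [ent, pr, Finset.univ_eq_empty]
  | inr hΩ =>
  have key : ∀ a, p a ≠ 0 → pr p f (f a) = pr p g (g a) := by
    intro a ha
    apply Finset.sum_congr rfl; intro b _
    by_cases hb : p b = 0
    · simp [hb]
    · by_cases hfb : f b = f a
      · rw [if_pos hfb, if_pos ((h b hb a ha).mp hfb)]
      · rw [if_neg hfb, if_neg (fun hc => hfb ((h b hb a ha).mpr hc))]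
  set wf : S → Ω := fun y => Classical.epsilon (fun a => p a ≠ 0 ∧ f a = y) with hwf
  set wg : T → Ω := fun z => Classical.epsilon (fun a => p a ≠ 0 ∧ g a = z) with hwg
  have hwfs : ∀ y ∈ (Finset.univ.filter (fun ω => p ω ≠ 0)).image f,
      p (wf y) ≠ 0 ∧ f (wf y) = y := by
    intro y hy
    simp only [Finset.mem_image, Finset.mem_filter, Finset.mem_univ, true_and] at hy
    exact Classical.epsilon_spec (by tauto : ∃ a, p a ≠ 0 ∧ f a = y)
  have hwgs : ∀ z ∈ (Finset.univ.filter (fun ω => p ω ≠ 0)).image g,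
      p (wg z) ≠ 0 ∧ g (wg z) = z := by
    intro z hz
    simp only [Finset.mem_image, Finset.mem_filter, Finset.mem_univ, true_and] at hz
    exact Classical.epsilon_spec (by tauto : ∃ a, p a ≠ 0 ∧ g a = z)
  unfold ent
  congr 1
  rw [← Finset.sum_subset (Finset.subset_univ ((Finset.univ.filter (fun ω => p ω ≠ 0)).image f))
      (fun y _ hy => by
        have : pr p f y = 0 := pr_eq_zero_of_ne p f (fun ω hω hfy => hy (by
          simp only [Finset.mem_image, Finset.mem_filter, Finset.mem_univ, true_and]
          exact ⟨ω, hω, hfy⟩))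
        simp [this]),
      ← Finset.sum_subset (Finset.subset_univ ((Finset.univ.filter (fun ω => p ω ≠ 0)).image g))
      (fun z _ hz => by
        have : pr p g z = 0 := pr_eq_zero_of_ne p g (fun ω hω hfy => hz (by
          simp only [Finset.mem_image, Finset.mem_filter, Finset.mem_univ, true_and]
          exact ⟨ω, hω, hfy⟩))
        simp [this])]
  refine Finset.sum_bij' (fun y _ => g (wf y)) (fun z _ => f (wg z)) ?_ ?_ ?_ ?_ ?_
  · intro y hy
    simp only [Finset.mem_image, Finset.mem_filter, Finset.mem_univ, true_and]
    exact ⟨wf y, (hwfs y hy).1, rfl⟩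
  · intro z hz
    simp only [Finset.mem_image, Finset.mem_filter, Finset.mem_univ, true_and]
    exact ⟨wg z, (hwgs z hz).1, rfl⟩
  · intro y hy
    obtain ⟨h1, h2⟩ := hwfs y hy
    have hz : g (wf y) ∈ (Finset.univ.filter (fun ω => p ω ≠ 0)).image g := by
      simp only [Finset.mem_image, Finset.mem_filter, Finset.mem_univ, true_and]
      exact ⟨wf y, h1, rfl⟩
    obtain ⟨h3, h4⟩ := hwgs _ hz
    calc f (wg (g (wf y))) = f (wf y) := (h _ h3 _ h1).mpr h4
      _ = y := h2
  · intro z hz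
    obtain ⟨h1, h2⟩ := hwgs z hz
    have hy : f (wg z) ∈ (Finset.univ.filter (fun ω => p ω ≠ 0)).image f := by
      simp only [Finset.mem_image, Finset.mem_filter, Finset.mem_univ, true_and]
      exact ⟨wg z, h1, rfl⟩
    obtain ⟨h3, h4⟩ := hwfs _ hy
    calc g (wf (f (wg z))) = g (wg z) := (h _ h3 _ h1).mp h4
      _ = z := h2
  · intro y hy
    obtain ⟨h1, h2⟩ := hwfs y hy
    have e := key _ h1
    rw [h2] at e
    rw [e]

end basic

section part2
variable {Ω S T U : Type*} [Fintype Ω] [Fintype S] [Fintype T] [Fintype U] (p : Ω → ℝ)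
open Classical
-- marginal lemmas
lemma marg_pair (f : Ω → S) (h : Ω → U) (z : U) :
    ∑ x, pr p (fun ω => (f ω, h ω)) (x, z) = pr p h z := by
  unfold pr; rw [Finset.sum_comm]
  refine Finset.sum_congr rfl fun ω _ => ?_
  by_cases hc : h ω = z
  · simp [Prod.ext_iff, hc]
  · simp [Prod.ext_iff, hc]

lemma marg_mid (f : Ω → S) (g : Ω → T) (h : Ω → U) (x : S) (z : U) :
    ∑ y, pr p (fun ω => (f ω, g ω, h ω)) (x, y, z) = pr p (fun ω => (f ω, h ω)) (x, z) := by
  unfold pr; rw [Finset.sum_comm]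
  refine Finset.sum_congr rfl fun ω _ => ?_
  by_cases hc : f ω = x ∧ h ω = z
  · simp [Prod.ext_iff, hc.1, hc.2]
  · rw [if_neg (by simp [Prod.ext_iff]; tauto)]
    exact Finset.sum_eq_zero fun y _ => by simp [Prod.ext_iff]; tauto

lemma marg_first (f : Ω → S) (g : Ω → T) (h : Ω → U) (y : T) (z : U) :
    ∑ x, pr p (fun ω => (f ω, g ω, h ω)) (x, y, z) = pr p (fun ω => (g ω, h ω)) (y, z) := by
  unfold pr; rw [Finset.sum_comm]
  refine Finset.sum_congr rfl fun ω _ => ?_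
  by_cases hc : g ω = y ∧ h ω = z
  · simp [Prod.ext_iff, hc.1, hc.2]
  · rw [if_neg (by simp [Prod.ext_iff]; tauto)]
    exact Finset.sum_eq_zero fun x _ => by simp [Prod.ext_iff]; tauto

set_option linter.unusedSectionVars false

lemma ent_submod (hp : ∀ ω, 0 ≤ p ω) (hsum : ∑ ω, p ω = 1)
    (f : Ω → S) (g : Ω → T) (h : Ω → U) :
    ent p (fun ω => (f ω, g ω, h ω)) + ent p h ≤
      ent p (fun ω => (f ω, h ω)) + ent p (fun ω => (g ω, h ω)) := by
  set P : S → T → U → ℝ := fun x y z => pr p (fun ω => (f ω, g ω, h ω)) (x, y, z) with hP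
  set A : S → U → ℝ := fun x z => pr p (fun ω => (f ω, h ω)) (x, z) with hA
  set B : T → U → ℝ := fun y z => pr p (fun ω => (g ω, h ω)) (y, z) with hB
  set R : U → ℝ := fun z => pr p h z with hR
  have hPnn : ∀ x y z, 0 ≤ P x y z := fun x y z => pr_nonneg p hp _ _
  have hAnn : ∀ x z, 0 ≤ A x z := fun x z => pr_nonneg p hp _ _
  have hBnn : ∀ y z, 0 ≤ B y z := fun y z => pr_nonneg p hp _ _
  have hRnn : ∀ z, 0 ≤ R z := fun z => pr_nonneg p hp _ _
  have hmA : ∀ x z, ∑ y, P x y z = A x z := fun x z => marg_mid p f g h x z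
  have hmB : ∀ y z, ∑ x, P x y z = B y z := fun y z => marg_first p f g h y z
  have hmR : ∀ z, ∑ x, A x z = R z := fun z => marg_pair p f h z
  have hmR' : ∀ z, ∑ y, B y z = R z := fun z => marg_pair p g h z
  have hPA : ∀ x y z, P x y z ≤ A x z := by
    intro x y z; rw [← hmA x z]
    exact Finset.single_le_sum (f := fun y => P x y z) (fun y _ => hPnn x y z) (Finset.mem_univ y)
  have hPB : ∀ x y z, P x y z ≤ B y z := by
    intro x y z; rw [← hmB y z]
    exact Finset.single_le_sum (f := fun x => P x y z) (fun x _ => hPnn x y z) (Finset.mem_univ x)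
  have hAR : ∀ x z, A x z ≤ R z := by
    intro x z; rw [← hmR z]
    exact Finset.single_le_sum (f := fun x => A x z) (fun x _ => hAnn x z) (Finset.mem_univ x)
  -- rewrite the four entropies as triple sums
  have eh3 : ent p (fun ω => (f ω, g ω, h ω)) =
      -∑ x, ∑ y, ∑ z, P x y z * Real.log (P x y z) := by
    rw [ent, Fintype.sum_prod_type]
    congr 1; refine Finset.sum_congr rfl fun x _ => ?_
    rw [Fintype.sum_prod_type]
  have ehA : ent p (fun ω => (f ω, h ω)) = -∑ x, ∑ y, ∑ z, P x y z * Real.log (A x z) := by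
    rw [ent, Fintype.sum_prod_type]
    congr 1; refine Finset.sum_congr rfl fun x _ => ?_
    calc ∑ z, A x z * Real.log (A x z) = ∑ z, ∑ y, P x y z * Real.log (A x z) :=
          Finset.sum_congr rfl fun z _ => by rw [← hmA x z, Finset.sum_mul]
      _ = ∑ y, ∑ z, P x y z * Real.log (A x z) := Finset.sum_comm
  have ehB : ent p (fun ω => (g ω, h ω)) = -∑ x, ∑ y, ∑ z, P x y z * Real.log (B y z) := by
    have e1 : ent p (fun ω => (g ω, h ω)) = -∑ y, ∑ z, ∑ x, P x y z * Real.log (B y z) := by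
      rw [ent, Fintype.sum_prod_type]
      congr 1; refine Finset.sum_congr rfl fun y _ => Finset.sum_congr rfl fun z _ => ?_
      show B y z * Real.log (B y z) = ∑ x, P x y z * Real.log (B y z)
      rw [← Finset.sum_mul, hmB]
    rw [e1]
    congr 1
    calc ∑ y, ∑ z, ∑ x, P x y z * Real.log (B y z)
        = ∑ y, ∑ x, ∑ z, P x y z * Real.log (B y z) :=
          Finset.sum_congr rfl fun y _ => Finset.sum_comm
      _ = ∑ x, ∑ y, ∑ z, P x y z * Real.log (B y z) := Finset.sum_comm
  have ehR : ent p h = -∑ x, ∑ y, ∑ z, P x y z * Real.log (R z) := by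
    have e1 : ent p h = -∑ z, ∑ x, ∑ y, P x y z * Real.log (R z) := by
      rw [ent]
      congr 1; refine Finset.sum_congr rfl fun z _ => ?_
      show R z * Real.log (R z) = _
      rw [← hmR z, Finset.sum_mul]
      exact Finset.sum_congr rfl fun x _ => by rw [← hmA, Finset.sum_mul]
    rw [e1]
    congr 1
    calc ∑ z, ∑ x, ∑ y, P x y z * Real.log (R z)
        = ∑ x, ∑ z, ∑ y, P x y z * Real.log (R z) := Finset.sum_comm
      _ = ∑ x, ∑ y, ∑ z, P x y z * Real.log (R z) :=
          Finset.sum_congr rfl fun x _ => Finset.sum_comm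
  -- pointwise bound
  have hterm : ∀ x y z, P x y z * Real.log (A x z) + P x y z * Real.log (B y z)
      - P x y z * Real.log (P x y z) - P x y z * Real.log (R z)
      ≤ A x z * B y z / R z - P x y z := by
    intro x y z
    rcases eq_or_lt_of_le (hPnn x y z) with hP0 | hPpos
    · rw [← hP0]
      have : 0 ≤ A x z * B y z / R z := div_nonneg (mul_nonneg (hAnn x z) (hBnn y z)) (hRnn z)
      simpa using this
    · have hApos : 0 < A x z := lt_of_lt_of_le hPpos (hPA x y z)
      have hBpos : 0 < B y z := lt_of_lt_of_le hPpos (hPB x y z)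
      have hRpos : 0 < R z := lt_of_lt_of_le hApos (hAR x z)
      have hlog : Real.log (A x z) + Real.log (B y z) - Real.log (P x y z) - Real.log (R z)
          = Real.log (A x z * B y z / (P x y z * R z)) := by
        rw [Real.log_div (by positivity) (by positivity), Real.log_mul (by positivity)
          (by positivity), Real.log_mul (by positivity) (by positivity)]
        ring
      have hle : Real.log (A x z * B y z / (P x y z * R z))
          ≤ A x z * B y z / (P x y z * R z) - 1 :=
        Real.log_le_sub_one_of_pos (by positivity)
      have halg : P x y z * (A x z * B y z / (P x y z * R z) - 1)
          = A x z * B y z / R z - P x y z := by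
        field_simp
      calc P x y z * Real.log (A x z) + P x y z * Real.log (B y z)
          - P x y z * Real.log (P x y z) - P x y z * Real.log (R z)
          = P x y z * Real.log (A x z * B y z / (P x y z * R z)) := by rw [← hlog]; ring
        _ ≤ P x y z * (A x z * B y z / (P x y z * R z) - 1) :=
            mul_le_mul_of_nonneg_left hle (le_of_lt hPpos)
        _ = A x z * B y z / R z - P x y z := halg
  -- sum bounds
  have hsumP : ∑ x, ∑ y, ∑ z, P x y z = 1 := by
    have := pr_sum p (fun ω => (f ω, g ω, h ω))
    rw [hsum] at this
    rw [← this, Fintype.sum_prod_type]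
    exact Finset.sum_congr rfl fun x _ => by rw [Fintype.sum_prod_type]
  have hsumABR : ∑ x, ∑ y, ∑ z, A x z * B y z / R z ≤ 1 := by
    have e1 : ∑ x, ∑ y, ∑ z, A x z * B y z / R z = ∑ z, ∑ x, ∑ y, A x z * B y z / R z := by
      calc ∑ x, ∑ y, ∑ z, A x z * B y z / R z
          = ∑ x, ∑ z, ∑ y, A x z * B y z / R z :=
            Finset.sum_congr rfl fun x _ => Finset.sum_comm
        _ = ∑ z, ∑ x, ∑ y, A x z * B y z / R z := Finset.sum_comm
    rw [e1]
    have e2 : ∀ z, ∑ x, ∑ y, A x z * B y z / R z = R z * R z / R z := by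
      intro z
      calc ∑ x, ∑ y, A x z * B y z / R z
          = ∑ x, (∑ y, A x z * B y z) / R z :=
            Finset.sum_congr rfl fun x _ => by rw [Finset.sum_div]
        _ = (∑ x, ∑ y, A x z * B y z) / R z := by rw [Finset.sum_div]
        _ = ((∑ x, A x z) * (∑ y, B y z)) / R z := by rw [← Finset.sum_mul_sum]
        _ = R z * R z / R z := by rw [hmR, hmR']
    rw [Finset.sum_congr rfl fun z _ => e2 z]
    have e3 : ∀ z, R z * R z / R z ≤ R z := by
      intro z
      rcases eq_or_lt_of_le (hRnn z) with h0 | hpos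
      · rw [← h0]; simp
      · rw [mul_div_assoc, div_self (ne_of_gt hpos), mul_one]
    calc ∑ z, R z * R z / R z ≤ ∑ z, R z := Finset.sum_le_sum fun z _ => e3 z
      _ = 1 := by rw [pr_sum p h, hsum]
  have key : ∑ x, ∑ y, ∑ z, (P x y z * Real.log (A x z) + P x y z * Real.log (B y z)
      - P x y z * Real.log (P x y z) - P x y z * Real.log (R z)) ≤ 0 := by
    calc ∑ x, ∑ y, ∑ z, (P x y z * Real.log (A x z) + P x y z * Real.log (B y z)
        - P x y z * Real.log (P x y z) - P x y z * Real.log (R z))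
        ≤ ∑ x, ∑ y, ∑ z, (A x z * B y z / R z - P x y z) :=
          Finset.sum_le_sum fun x _ => Finset.sum_le_sum fun y _ =>
            Finset.sum_le_sum fun z _ => hterm x y z
      _ = (∑ x, ∑ y, ∑ z, A x z * B y z / R z) - (∑ x, ∑ y, ∑ z, P x y z) := by
          simp [Finset.sum_sub_distrib]
      _ ≤ 0 := by rw [hsumP]; linarith [hsumABR]
  have split : ∑ x, ∑ y, ∑ z, (P x y z * Real.log (A x z) + P x y z * Real.log (B y z)
      - P x y z * Real.log (P x y z) - P x y z * Real.log (R z))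
      = (∑ x, ∑ y, ∑ z, P x y z * Real.log (A x z))
        + (∑ x, ∑ y, ∑ z, P x y z * Real.log (B y z))
        - (∑ x, ∑ y, ∑ z, P x y z * Real.log (P x y z))
        - (∑ x, ∑ y, ∑ z, P x y z * Real.log (R z)) := by
    simp [Finset.sum_sub_distrib, Finset.sum_add_distrib]
  rw [eh3, ehA, ehB, ehR]
  linarith [key, split.symm.trans_le key]

end part2

section part3
open Classical
variable {Ω S T M : Type*} [Fintype Ω] [Fintype S] [Fintype T] [Fintype M]

open Classical in
noncomputable def cq (p : Ω → ℝ) (m : Ω → M) : Ω × Ω → ℝ := fun a =>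
  if m a.1 = m a.2 then p a.1 * p a.2 / pr p m (m a.1) else 0

variable (p : Ω → ℝ) (m : Ω → M)

lemma p_le_pr (hp : ∀ ω, 0 ≤ p ω) (ω : Ω) : p ω ≤ pr p m (m ω) := by
  have := Finset.single_le_sum (f := fun b => if m b = m ω then p b else 0)
    (fun b _ => by split <;> simp [hp b]) (Finset.mem_univ ω)
  simpa [pr] using this

lemma cq_nonneg (hp : ∀ ω, 0 ≤ p ω) (a : Ω × Ω) : 0 ≤ cq p m a := by
  unfold cq; split
  · exact div_nonneg (mul_nonneg (hp _) (hp _)) (pr_nonneg p hp m _)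
  · exact le_refl 0

lemma cq_row (hp : ∀ ω, 0 ≤ p ω) (a : Ω) : ∑ b, cq p m (a, b) = p a := by
  have e1 : ∀ b, cq p m (a, b) = p a / pr p m (m a) * (if m b = m a then p b else 0) := by
    intro b; unfold cq; simp only
    by_cases hb : m a = m b
    · rw [if_pos hb, if_pos hb.symm]; ring
    · rw [if_neg hb, if_neg (Ne.symm hb), mul_zero]
  rw [Finset.sum_congr rfl fun b _ => e1 b, ← Finset.mul_sum]
  have e2 : ∑ b, (if m b = m a then p b else 0) = pr p m (m a) := rfl
  rw [e2]
  rcases eq_or_lt_of_le (pr_nonneg p hp m (m a)) with h0 | hpos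
  · have hpa : p a = 0 := le_antisymm (h0 ▸ p_le_pr p m hp a) (hp a)
    simp [hpa]
  · rw [div_mul_cancel₀ _ (ne_of_gt hpos)]

lemma cq_sum (hp : ∀ ω, 0 ≤ p ω) (hsum : ∑ ω, p ω = 1) : ∑ a, cq p m a = 1 := by
  rw [Fintype.sum_prod_type, ← hsum]
  exact Finset.sum_congr rfl fun a _ => cq_row p m hp a

lemma cq_symm (a : Ω × Ω) : cq p m a.swap = cq p m a := by
  obtain ⟨x, y⟩ := a
  unfold cq; simp only [Prod.swap]
  by_cases h : m x = m y
  · rw [if_pos h, if_pos h.symm, h]; ring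
  · rw [if_neg h, if_neg (Ne.symm h)]

lemma pr_fst (hp : ∀ ω, 0 ≤ p ω) (F : Ω → S) (y : S) :
    pr (cq p m) (fun a => F a.1) y = pr p F y := by
  unfold pr
  rw [Fintype.sum_prod_type]
  refine Finset.sum_congr rfl fun a _ => ?_
  by_cases hF : F a = y
  · simp only [hF, if_pos rfl]
    exact cq_row p m hp a
  · simp [hF]

lemma ent_fst (hp : ∀ ω, 0 ≤ p ω) (F : Ω → S) :
    ent (cq p m) (fun a => F a.1) = ent p F := by
  unfold ent; congr 1
  exact Finset.sum_congr rfl fun y _ => by rw [pr_fst p m hp F y]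

lemma ent_swap (F : Ω × Ω → S) :
    ent (cq p m) (fun a => F a.swap) = ent (cq p m) F := by
  unfold ent; congr 1
  refine Finset.sum_congr rfl fun y _ => ?_
  have : pr (cq p m) (fun a => F a.swap) y = pr (cq p m) F y := by
    unfold pr
    exact Fintype.sum_equiv (Equiv.prodComm Ω Ω)
      (fun a => if F a.swap = y then cq p m a else 0)
      (fun a => if F a = y then cq p m a else 0)
      (fun a => by simp only [Equiv.prodComm_apply]; rw [cq_symm p m a]; rfl)
  rw [this]

lemma pr_ci (hp : ∀ ω, 0 ≤ p ω) (f : Ω → S) (g : Ω → T) (y : S) (z : T) (c : M) :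
    pr (cq p m) (fun a => (f a.1, g a.2, m a.1)) (y, z, c)
      = pr p (fun ω => (f ω, m ω)) (y, c) * pr p (fun ω => (g ω, m ω)) (z, c) / pr p m c := by
  unfold pr
  rw [Fintype.sum_prod_type]
  have e1 : ∀ a, (∑ b, @ite ℝ (((fun a : Ω × Ω => (f a.1, g a.2, m a.1)) (a, b)) = (y, z, c))
        (propDecidable _) (cq p m (a, b)) 0)
      = (@ite ℝ ((f a, m a) = (y, c)) (propDecidable _) (p a) 0)
        * (∑ ω, @ite ℝ ((g ω, m ω) = (z, c)) (propDecidable _) (p ω) 0) / pr p m c := by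
    intro a
    by_cases hfa : f a = y ∧ m a = c
    · have e2 : ∀ b, (@ite ℝ (((fun a : Ω × Ω => (f a.1, g a.2, m a.1)) (a, b)) = (y, z, c))
          (propDecidable _) (cq p m (a, b)) 0)
          = p a / pr p m c * (@ite ℝ ((g b, m b) = (z, c)) (propDecidable _) (p b) 0) := by
        intro b
        beta_reduce
        unfold cq
        simp only [Prod.mk.injEq, hfa.1, hfa.2, true_and, and_true]
        by_cases hgb : g b = z
        · by_cases hmb : m b = c
          · rw [if_pos hgb, if_pos hmb.symm, if_pos ⟨hgb, hmb⟩]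
            ring
          · rw [if_pos hgb, if_neg (fun h => hmb h.symm), if_neg (by simp [hmb])]
            simp
        · rw [if_neg hgb, if_neg (by simp [hgb])]
          simp
      refine Eq.trans (Finset.sum_congr rfl fun b _ => e2 b) ?_
      rw [← Finset.mul_sum, if_pos (show (f a, m a) = (y, c) by simp [hfa.1, hfa.2])]
      ring
    · refine Eq.trans (Finset.sum_eq_zero fun b _ => ?_) ?_
      · rw [if_neg]
        simp only [Prod.mk.injEq, not_and]
        intro h1 _ h2
        exact absurd ⟨h1, h2⟩ hfa
      · rw [if_neg (by simp only [Prod.mk.injEq, not_and]; exact fun h1 h2 => hfa ⟨h1, h2⟩)]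
        simp
  refine Eq.trans (Finset.sum_congr rfl fun a _ => e1 a) ?_
  rw [← Finset.sum_div, ← Finset.sum_mul]
  rfl

lemma ent_ci (hp : ∀ ω, 0 ≤ p ω) (f : Ω → S) (g : Ω → T) :
    ent (cq p m) (fun a => (f a.1, g a.2, m a.1))
      = ent p (fun ω => (f ω, m ω)) + ent p (fun ω => (g ω, m ω)) - ent p m := by
  set A : S → M → ℝ := fun y c => pr p (fun ω => (f ω, m ω)) (y, c) with hA
  set B : T → M → ℝ := fun z c => pr p (fun ω => (g ω, m ω)) (z, c) with hB
  set R : M → ℝ := fun c => pr p m c with hR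
  have hAnn : ∀ y c, 0 ≤ A y c := fun y c => pr_nonneg p hp _ _
  have hBnn : ∀ z c, 0 ≤ B z c := fun z c => pr_nonneg p hp _ _
  have hRnn : ∀ c, 0 ≤ R c := fun c => pr_nonneg p hp _ _
  have hmA : ∀ c, ∑ y, A y c = R c := fun c => marg_pair p f m c
  have hmB : ∀ c, ∑ z, B z c = R c := fun c => marg_pair p g m c
  have hAR : ∀ y c, A y c ≤ R c := fun y c => by
    rw [← hmA c]
    exact Finset.single_le_sum (f := fun y => A y c) (fun y _ => hAnn y c) (Finset.mem_univ y)
  have hBR : ∀ z c, B z c ≤ R c := fun z c => by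
    rw [← hmB c]
    exact Finset.single_le_sum (f := fun z => B z c) (fun z _ => hBnn z c) (Finset.mem_univ z)
  -- pointwise expansion of the log of the product form
  have hsplit : ∀ y z c, (A y c * B z c / R c) * Real.log (A y c * B z c / R c)
      = (A y c * B z c / R c) * Real.log (A y c)
        + (A y c * B z c / R c) * Real.log (B z c)
        - (A y c * B z c / R c) * Real.log (R c) := by
    intro y z c
    rcases eq_or_lt_of_le (hAnn y c) with h0 | hApos
    · rw [← h0]; simp
    rcases eq_or_lt_of_le (hBnn z c) with h0 | hBpos
    · rw [← h0]; simp
    have hRpos : 0 < R c := lt_of_lt_of_le hApos (hAR y c)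
    rw [Real.log_div (by positivity) (by positivity), Real.log_mul (by positivity) (by positivity)]
    ring
  -- the joint entropy as a triple sum
  have lhs_eq : ent (cq p m) (fun a => (f a.1, g a.2, m a.1))
      = -∑ y, ∑ z, ∑ c, (A y c * B z c / R c) * Real.log (A y c * B z c / R c) := by
    rw [ent, Fintype.sum_prod_type]
    congr 1
    refine Finset.sum_congr rfl fun y _ => ?_
    rw [Fintype.sum_prod_type]
    refine Finset.sum_congr rfl fun z _ => Finset.sum_congr rfl fun c _ => ?_
    rw [pr_ci p m hp f g y z c]
  -- collapse each of the three parts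
  have part1 : ∑ y, ∑ z, ∑ c, (A y c * B z c / R c) * Real.log (A y c)
      = ∑ y, ∑ c, A y c * Real.log (A y c) := by
    refine Finset.sum_congr rfl fun y _ => ?_
    rw [Finset.sum_comm]
    refine Finset.sum_congr rfl fun c _ => ?_
    have : ∑ z, (A y c * B z c / R c) * Real.log (A y c)
        = (A y c * (∑ z, B z c) / R c) * Real.log (A y c) := by
      rw [Finset.mul_sum, Finset.sum_div, Finset.sum_mul]
    rw [this, hmB c]
    rcases eq_or_lt_of_le (hRnn c) with h0 | hRpos
    · have : A y c = 0 := le_antisymm (h0 ▸ hAR y c) (hAnn y c)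
      simp [this]
    · rw [mul_div_assoc, div_self (ne_of_gt hRpos), mul_one]
  have part2 : ∑ y, ∑ z, ∑ c, (A y c * B z c / R c) * Real.log (B z c)
      = ∑ z, ∑ c, B z c * Real.log (B z c) := by
    rw [Finset.sum_comm]
    refine Finset.sum_congr rfl fun z _ => ?_
    rw [Finset.sum_comm]
    refine Finset.sum_congr rfl fun c _ => ?_
    have : ∑ y, (A y c * B z c / R c) * Real.log (B z c)
        = ((∑ y, A y c) * B z c / R c) * Real.log (B z c) := by
      rw [Finset.sum_mul, Finset.sum_div, Finset.sum_mul]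
    rw [this, hmA c]
    rcases eq_or_lt_of_le (hRnn c) with h0 | hRpos
    · have : B z c = 0 := le_antisymm (h0 ▸ hBR z c) (hBnn z c)
      simp [this]
    · rw [mul_comm (R c) (B z c), mul_div_assoc, div_self (ne_of_gt hRpos), mul_one]
  have part3 : ∑ y, ∑ z, ∑ c, (A y c * B z c / R c) * Real.log (R c)
      = ∑ c, R c * Real.log (R c) := by
    have swap1 : ∑ y, ∑ z, ∑ c, (A y c * B z c / R c) * Real.log (R c)
        = ∑ c, ∑ y, ∑ z, (A y c * B z c / R c) * Real.log (R c) := by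
      calc ∑ y, ∑ z, ∑ c, (A y c * B z c / R c) * Real.log (R c)
          = ∑ y, ∑ c, ∑ z, (A y c * B z c / R c) * Real.log (R c) :=
            Finset.sum_congr rfl fun y _ => Finset.sum_comm
        _ = ∑ c, ∑ y, ∑ z, (A y c * B z c / R c) * Real.log (R c) := Finset.sum_comm
    rw [swap1]
    refine Finset.sum_congr rfl fun c _ => ?_
    have : ∑ y, ∑ z, (A y c * B z c / R c) * Real.log (R c)
        = ((∑ y, A y c) * (∑ z, B z c) / R c) * Real.log (R c) := by
      rw [Finset.sum_mul_sum]
      rw [Finset.sum_div, Finset.sum_mul]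
      refine Finset.sum_congr rfl fun y _ => ?_
      rw [Finset.sum_div, Finset.sum_mul]
    rw [this, hmA c, hmB c]
    rcases eq_or_lt_of_le (hRnn c) with h0 | hRpos
    · rw [← h0]; simp
    · rw [mul_div_assoc, div_self (ne_of_gt hRpos), mul_one]
  have entA : ent p (fun ω => (f ω, m ω)) = -∑ y, ∑ c, A y c * Real.log (A y c) := by
    rw [ent, Fintype.sum_prod_type]
  have entB : ent p (fun ω => (g ω, m ω)) = -∑ z, ∑ c, B z c * Real.log (B z c) := by
    rw [ent, Fintype.sum_prod_type]
  have entR : ent p m = -∑ c, R c * Real.log (R c) := by rw [ent]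
  rw [lhs_eq, entA, entB, entR]
  rw [Finset.sum_congr rfl fun y (_ : y ∈ Finset.univ) =>
    Finset.sum_congr rfl fun z (_ : z ∈ Finset.univ) =>
    Finset.sum_congr rfl fun c (_ : c ∈ Finset.univ) => hsplit y z c]
  rw [← part1, ← part2, ← part3]
  simp only [Finset.sum_add_distrib, Finset.sum_sub_distrib]
  ring

end part3
section part4
open Classical
variable {Ω : Type*} [Fintype Ω]

open Classical in
/-- Joint variable of a subset of the five variables
`X₀ = s₁∘fst, X₁ = s₂∘fst, X₂ = s₃∘fst, X₃ = s₄∘fst, X₄ = s₁∘snd`. -/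
noncomputable def JJ (s₁ s₂ s₃ s₄ : Setoid Ω) (U : Finset (Fin 5)) (a : Ω × Ω) :
    Option (Quotient s₁) × Option (Quotient s₂) × Option (Quotient s₃) ×
      Option (Quotient s₄) × Option (Quotient s₁) :=
  (if 0 ∈ U then some (Quotient.mk s₁ a.1) else none,
   if 1 ∈ U then some (Quotient.mk s₂ a.1) else none,
   if 2 ∈ U then some (Quotient.mk s₃ a.1) else none,
   if 3 ∈ U then some (Quotient.mk s₄ a.1) else none,
   if 4 ∈ U then some (Quotient.mk s₁ a.2) else none)

lemma ite_some_none_iff {α : Type*} (c : Prop) [Decidable c] (x y : α) :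
    ((if c then some x else none) = (if c then some y else none)) ↔ (c → x = y) := by
  split_ifs with h <;> simp [h]

lemma JJ_eq_iff (s₁ s₂ s₃ s₄ : Setoid Ω) (U : Finset (Fin 5)) (a b : Ω × Ω) :
    JJ s₁ s₂ s₃ s₄ U a = JJ s₁ s₂ s₃ s₄ U b ↔
      ((0 ∈ U → Quotient.mk s₁ a.1 = Quotient.mk s₁ b.1) ∧
       (1 ∈ U → Quotient.mk s₂ a.1 = Quotient.mk s₂ b.1) ∧
       (2 ∈ U → Quotient.mk s₃ a.1 = Quotient.mk s₃ b.1) ∧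
       (3 ∈ U → Quotient.mk s₄ a.1 = Quotient.mk s₄ b.1) ∧
       (4 ∈ U → Quotient.mk s₁ a.2 = Quotient.mk s₁ b.2)) := by
  unfold JJ
  rw [Prod.ext_iff, Prod.ext_iff, Prod.ext_iff, Prod.ext_iff]
  simp only [ite_some_none_iff]

lemma JJ_det (s₁ s₂ s₃ s₄ : Setoid Ω) {U V : Finset (Fin 5)} (hUV : U ⊆ V) (a b : Ω × Ω)
    (h : JJ s₁ s₂ s₃ s₄ V a = JJ s₁ s₂ s₃ s₄ V b) : JJ s₁ s₂ s₃ s₄ U a = JJ s₁ s₂ s₃ s₄ U b := by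
  rw [JJ_eq_iff] at h ⊢
  obtain ⟨h0, h1, h2, h3, h4⟩ := h
  exact ⟨fun hh => h0 (hUV hh), fun hh => h1 (hUV hh), fun hh => h2 (hUV hh),
    fun hh => h3 (hUV hh), fun hh => h4 (hUV hh)⟩

lemma JJ_union (s₁ s₂ s₃ s₄ : Setoid Ω) (U V : Finset (Fin 5)) (a b : Ω × Ω) :
    (JJ s₁ s₂ s₃ s₄ U a = JJ s₁ s₂ s₃ s₄ U b ∧ JJ s₁ s₂ s₃ s₄ V a = JJ s₁ s₂ s₃ s₄ V b) ↔
      JJ s₁ s₂ s₃ s₄ (U ∪ V) a = JJ s₁ s₂ s₃ s₄ (U ∪ V) b := by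
  simp only [JJ_eq_iff, Finset.mem_union]
  constructor
  · rintro ⟨⟨u0, u1, u2, u3, u4⟩, ⟨v0, v1, v2, v3, v4⟩⟩
    exact ⟨fun h => h.elim u0 v0, fun h => h.elim u1 v1, fun h => h.elim u2 v2,
      fun h => h.elim u3 v3, fun h => h.elim u4 v4⟩
  · rintro ⟨w0, w1, w2, w3, w4⟩
    exact ⟨⟨fun h => w0 (Or.inl h), fun h => w1 (Or.inl h), fun h => w2 (Or.inl h),
        fun h => w3 (Or.inl h), fun h => w4 (Or.inl h)⟩,
      ⟨fun h => w0 (Or.inr h), fun h => w1 (Or.inr h), fun h => w2 (Or.inr h),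
        fun h => w3 (Or.inr h), fun h => w4 (Or.inr h)⟩⟩

open Classical in
lemma entropy_eq_ent (p : Ω → ℝ) (s : Setoid Ω) :
    entropy p s = ent p (fun ω => (⟦ω⟧ : Quotient s)) := by
  have hc : ∀ c, classProb p s c = pr p (fun ω => (⟦ω⟧ : Quotient s)) c := by
    intro c
    unfold classProb pr
    rw [Finset.sum_filter]
    refine Finset.sum_congr rfl fun a _ => ?_
    by_cases h : (⟦a⟧ : Quotient s) = c
    · rw [if_pos h, if_pos h]
    · rw [if_neg h, if_neg h]
  unfold entropy ent
  congr 1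
  exact Finset.sum_congr rfl fun c _ => by rw [hc c]

lemma mk_eq_iff (s : Setoid Ω) (a b : Ω) :
    Quotient.mk s a = Quotient.mk s b ↔ s a b :=
  ⟨Quotient.exact, Quotient.sound⟩

lemma mk_inf_eq_iff (r s : Setoid Ω) (a b : Ω) :
    Quotient.mk (r ⊓ s) a = Quotient.mk (r ⊓ s) b ↔ (r a b ∧ s a b) :=
  ⟨fun h => Quotient.exact h, fun h => Quotient.sound h⟩

lemma mk_inf3_eq_iff (r s t : Setoid Ω) (a b : Ω) :
    Quotient.mk (r ⊓ s ⊓ t) a = Quotient.mk (r ⊓ s ⊓ t) b ↔ ((r a b ∧ s a b) ∧ t a b) :=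
  ⟨fun h => Quotient.exact h, fun h => Quotient.sound h⟩

lemma cq_ne_zero {M : Type*} [Fintype M] (p : Ω → ℝ) (m : Ω → M) (a : Ω × Ω)
    (h : cq p m a ≠ 0) : m a.1 = m a.2 := by
  by_contra hc
  exact h (by unfold cq; rw [if_neg hc])

end part4

/-- The Zhang–Yeung non-Shannon-type information inequality in four variables,
stated for joint entropies of sample-space partitions (setoids), where the
joint information of a collection is the common refinement `⊓`. -/
theorem stmt_19 {Ω : Type*} [Fintype Ω] (p : Ω → ℝ) (hp : ∀ ω, 0 ≤ p ω)
    (hsum : ∑ ω, p ω = 1) (s₁ s₂ s₃ s₄ : Setoid Ω) :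
    3 * entropy p (s₁ ⊓ s₃) + 3 * entropy p (s₁ ⊓ s₄) + entropy p (s₂ ⊓ s₃) +
        entropy p (s₂ ⊓ s₄) + 3 * entropy p (s₃ ⊓ s₄) ≥
      entropy p s₁ + 2 * entropy p s₃ + 2 * entropy p s₄ + entropy p (s₁ ⊓ s₂) +
        4 * entropy p (s₁ ⊓ s₃ ⊓ s₄) + entropy p (s₂ ⊓ s₃ ⊓ s₄) := by

  classical
  set m : Ω → Quotient s₃ × Quotient s₄ :=
    fun ω => (Quotient.mk s₃ ω, Quotient.mk s₄ ω) with hm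
  have hq : ∀ a, 0 ≤ cq p m a := cq_nonneg p m hp
  have hqs : ∑ a, cq p m a = 1 := cq_sum p m hp hsum
  -- generic submodularity for joint variables indexed by subsets
  have hsub : ∀ U V : Finset (Fin 5),
      ent (cq p m) (JJ s₁ s₂ s₃ s₄ (U ∪ V)) + ent (cq p m) (JJ s₁ s₂ s₃ s₄ (U ∩ V)) ≤
        ent (cq p m) (JJ s₁ s₂ s₃ s₄ U) + ent (cq p m) (JJ s₁ s₂ s₃ s₄ V) := by
    intro U V
    have h0 := ent_submod (cq p m) hq hqs (JJ s₁ s₂ s₃ s₄ U) (JJ s₁ s₂ s₃ s₄ V)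
      (JJ s₁ s₂ s₃ s₄ (U ∩ V))
    have e1 : ent (cq p m) (fun a => (JJ s₁ s₂ s₃ s₄ U a, JJ s₁ s₂ s₃ s₄ (U ∩ V) a))
        = ent (cq p m) (JJ s₁ s₂ s₃ s₄ U) := by
      apply ent_ker_congr
      intro a _ b _
      simp only [Prod.mk.injEq]
      exact ⟨fun h' => h'.1,
        fun h' => ⟨h', JJ_det s₁ s₂ s₃ s₄ Finset.inter_subset_left a b h'⟩⟩
    have e2 : ent (cq p m) (fun a => (JJ s₁ s₂ s₃ s₄ V a, JJ s₁ s₂ s₃ s₄ (U ∩ V) a))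
        = ent (cq p m) (JJ s₁ s₂ s₃ s₄ V) := by
      apply ent_ker_congr
      intro a _ b _
      simp only [Prod.mk.injEq]
      exact ⟨fun h' => h'.1,
        fun h' => ⟨h', JJ_det s₁ s₂ s₃ s₄ Finset.inter_subset_right a b h'⟩⟩
    have e3 : ent (cq p m)
        (fun a => (JJ s₁ s₂ s₃ s₄ U a, JJ s₁ s₂ s₃ s₄ V a, JJ s₁ s₂ s₃ s₄ (U ∩ V) a))
        = ent (cq p m) (JJ s₁ s₂ s₃ s₄ (U ∪ V)) := by
      apply ent_ker_congr
      intro a _ b _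
      simp only [Prod.mk.injEq]
      constructor
      · rintro ⟨h1, h2, _⟩
        exact (JJ_union s₁ s₂ s₃ s₄ U V a b).mp ⟨h1, h2⟩
      · intro h'
        have h12 := (JJ_union s₁ s₂ s₃ s₄ U V a b).mpr h'
        exact ⟨h12.1, h12.2, JJ_det s₁ s₂ s₃ s₄
          (Finset.inter_subset_left.trans Finset.subset_union_left) a b h'⟩
    rw [e1, e2, e3] at h0
    exact h0
  -- first-coordinate reduction
  have hfst : ∀ U : Finset (Fin 5), (4 : Fin 5) ∉ U →
      ent (cq p m) (JJ s₁ s₂ s₃ s₄ U) = ent p (fun ω => JJ s₁ s₂ s₃ s₄ U (ω, ω)) := by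
    intro U h4
    have efst := ent_fst p m hp (fun ω => JJ s₁ s₂ s₃ s₄ U (ω, ω))
    rw [← efst]
    refine congrArg (ent (cq p m)) ?_
    funext a
    unfold JJ
    simp [if_neg h4]
  -- bridges to entropies on Ω
  have b0 : ent (cq p m) (JJ s₁ s₂ s₃ s₄ {0}) = entropy p s₁ := by
    rw [hfst {0} (by decide), entropy_eq_ent]
    apply ent_ker_congr
    intro a _ b _
    simp [JJ_eq_iff, mk_eq_iff]
  have b2 : ent (cq p m) (JJ s₁ s₂ s₃ s₄ {2}) = entropy p s₃ := by
    rw [hfst {2} (by decide), entropy_eq_ent]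
    apply ent_ker_congr
    intro a _ b _
    simp [JJ_eq_iff, mk_eq_iff]
  have b3 : ent (cq p m) (JJ s₁ s₂ s₃ s₄ {3}) = entropy p s₄ := by
    rw [hfst {3} (by decide), entropy_eq_ent]
    apply ent_ker_congr
    intro a _ b _
    simp [JJ_eq_iff, mk_eq_iff]
  have b01 : ent (cq p m) (JJ s₁ s₂ s₃ s₄ {0, 1}) = entropy p (s₁ ⊓ s₂) := by
    rw [hfst {0, 1} (by decide), entropy_eq_ent]
    apply ent_ker_congr
    intro a _ b _
    simp [JJ_eq_iff, mk_eq_iff, mk_inf_eq_iff, mk_inf3_eq_iff]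
    try exact Iff.rfl
    try tauto
  have b02 : ent (cq p m) (JJ s₁ s₂ s₃ s₄ {0, 2}) = entropy p (s₁ ⊓ s₃) := by
    rw [hfst {0, 2} (by decide), entropy_eq_ent]
    apply ent_ker_congr
    intro a _ b _
    simp [JJ_eq_iff, mk_eq_iff, mk_inf_eq_iff, mk_inf3_eq_iff]
    try exact Iff.rfl
    try tauto
  have b03 : ent (cq p m) (JJ s₁ s₂ s₃ s₄ {0, 3}) = entropy p (s₁ ⊓ s₄) := by
    rw [hfst {0, 3} (by decide), entropy_eq_ent]
    apply ent_ker_congr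
    intro a _ b _
    simp [JJ_eq_iff, mk_eq_iff, mk_inf_eq_iff, mk_inf3_eq_iff]
    try exact Iff.rfl
    try tauto
  have b12 : ent (cq p m) (JJ s₁ s₂ s₃ s₄ {1, 2}) = entropy p (s₂ ⊓ s₃) := by
    rw [hfst {1, 2} (by decide), entropy_eq_ent]
    apply ent_ker_congr
    intro a _ b _
    simp [JJ_eq_iff, mk_eq_iff, mk_inf_eq_iff, mk_inf3_eq_iff]
    try exact Iff.rfl
    try tauto
  have b13 : ent (cq p m) (JJ s₁ s₂ s₃ s₄ {1, 3}) = entropy p (s₂ ⊓ s₄) := by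
    rw [hfst {1, 3} (by decide), entropy_eq_ent]
    apply ent_ker_congr
    intro a _ b _
    simp [JJ_eq_iff, mk_eq_iff, mk_inf_eq_iff, mk_inf3_eq_iff]
    try exact Iff.rfl
    try tauto
  -- swap equalities
  have sw0 : ent (cq p m) (JJ s₁ s₂ s₃ s₄ {4}) = ent (cq p m) (JJ s₁ s₂ s₃ s₄ {0}) := by
    rw [← ent_swap p m (JJ s₁ s₂ s₃ s₄ {0})]
    apply ent_ker_congr
    intro a _ b _
    simp [JJ_eq_iff]
  have sw2 : ent (cq p m) (JJ s₁ s₂ s₃ s₄ {2, 4}) = ent (cq p m) (JJ s₁ s₂ s₃ s₄ {0, 2}) := by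
    rw [← ent_swap p m (JJ s₁ s₂ s₃ s₄ {0, 2})]
    apply ent_ker_congr
    intro a ha b hb
    have ha3 : s₃ a.1 a.2 := Quotient.exact (congrArg Prod.fst (cq_ne_zero p m a ha))
    have hb3 : s₃ b.1 b.2 := Quotient.exact (congrArg Prod.fst (cq_ne_zero p m b hb))
    simp (config := { decide := true }) [JJ_eq_iff, Prod.fst_swap, Prod.snd_swap]
    constructor
    · rintro ⟨h1, h2⟩
      exact ⟨h2, Quotient.sound (s₃.iseqv.trans (s₃.iseqv.symm ha3) (s₃.iseqv.trans (Quotient.exact h1) hb3))⟩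
    · rintro ⟨h1, h2⟩
      exact ⟨Quotient.sound (s₃.iseqv.trans ha3 (s₃.iseqv.trans (Quotient.exact h2) (s₃.iseqv.symm hb3))), h1⟩
  have sw3 : ent (cq p m) (JJ s₁ s₂ s₃ s₄ {3, 4}) = ent (cq p m) (JJ s₁ s₂ s₃ s₄ {0, 3}) := by
    rw [← ent_swap p m (JJ s₁ s₂ s₃ s₄ {0, 3})]
    apply ent_ker_congr
    intro a ha b hb
    have ha4 : s₄ a.1 a.2 := Quotient.exact (congrArg Prod.snd (cq_ne_zero p m a ha))
    have hb4 : s₄ b.1 b.2 := Quotient.exact (congrArg Prod.snd (cq_ne_zero p m b hb))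
    simp (config := { decide := true }) [JJ_eq_iff, Prod.fst_swap, Prod.snd_swap]
    constructor
    · rintro ⟨h1, h2⟩
      exact ⟨h2, Quotient.sound (s₄.iseqv.trans (s₄.iseqv.symm ha4) (s₄.iseqv.trans (Quotient.exact h1) hb4))⟩
    · rintro ⟨h1, h2⟩
      exact ⟨Quotient.sound (s₄.iseqv.trans ha4 (s₄.iseqv.trans (Quotient.exact h2) (s₄.iseqv.symm hb4))), h1⟩
  -- Ω-level bridges for the conditional-independence identities
  have bb1 : ent p (fun ω => (Quotient.mk s₁ ω, m ω)) = entropy p (s₁ ⊓ s₃ ⊓ s₄) := by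
    rw [entropy_eq_ent]
    apply ent_ker_congr
    intro a _ b _
    simp (config := { decide := true }) [hm, Prod.mk.injEq, JJ_eq_iff]
    try exact Iff.rfl
    try exact ⟨fun h => ⟨⟨h.1, h.2.1⟩, h.2.2⟩, fun h => ⟨h.1.1, h.1.2, h.2⟩⟩
    try tauto
    try exact Iff.rfl
    try tauto
    exact ⟨fun h => (mk_inf3_eq_iff _ _ _ a b).mpr ⟨⟨Quotient.exact h.1, Quotient.exact h.2.1⟩,
      Quotient.exact h.2.2⟩, fun h => have h' := (mk_inf3_eq_iff _ _ _ a b).mp h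
      ⟨Quotient.sound h'.1.1, Quotient.sound h'.1.2, Quotient.sound h'.2⟩⟩
  have bb2 : ent p (fun ω => (Quotient.mk s₂ ω, m ω)) = entropy p (s₂ ⊓ s₃ ⊓ s₄) := by
    rw [entropy_eq_ent]
    apply ent_ker_congr
    intro a _ b _
    simp (config := { decide := true }) [hm, Prod.mk.injEq, JJ_eq_iff]
    try exact Iff.rfl
    try exact ⟨fun h => ⟨⟨h.1, h.2.1⟩, h.2.2⟩, fun h => ⟨h.1.1, h.1.2, h.2⟩⟩
    try tauto
    try exact Iff.rfl
    try tauto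
    exact ⟨fun h => (mk_inf3_eq_iff _ _ _ a b).mpr ⟨⟨Quotient.exact h.1, Quotient.exact h.2.1⟩,
      Quotient.exact h.2.2⟩, fun h => have h' := (mk_inf3_eq_iff _ _ _ a b).mp h
      ⟨Quotient.sound h'.1.1, Quotient.sound h'.1.2, Quotient.sound h'.2⟩⟩
  have bb3 : ent p m = entropy p (s₃ ⊓ s₄) := by
    rw [entropy_eq_ent]
    apply ent_ker_congr
    intro a _ b _
    simp (config := { decide := true }) [hm, Prod.mk.injEq, JJ_eq_iff]
    try exact Iff.rfl
    try exact ⟨fun h => ⟨⟨h.1, h.2.1⟩, h.2.2⟩, fun h => ⟨h.1.1, h.1.2, h.2⟩⟩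
    try tauto
    exact ⟨fun h => (mk_inf_eq_iff _ _ a b).mpr ⟨Quotient.exact h.1, Quotient.exact h.2⟩,
      fun h => have h' := (mk_inf_eq_iff _ _ a b).mp h
      ⟨Quotient.sound h'.1, Quotient.sound h'.2⟩⟩
  have bb4 : ent p (fun ω => ((fun ω' => (Quotient.mk s₁ ω', Quotient.mk s₂ ω')) ω, m ω))
      = ent (cq p m) (JJ s₁ s₂ s₃ s₄ {0, 1, 2, 3}) := by
    rw [hfst {0, 1, 2, 3} (by decide)]
    apply ent_ker_congr
    intro a _ b _
    beta_reduce
    rw [JJ_eq_iff]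
    simp (config := { decide := true }) [hm, Prod.mk.injEq]
    tauto
  -- conditional independence identities
  have c1 : ent (cq p m) (JJ s₁ s₂ s₃ s₄ {0, 2, 3, 4})
      = 2 * entropy p (s₁ ⊓ s₃ ⊓ s₄) - entropy p (s₃ ⊓ s₄) := by
    have h0 := ent_ci p m hp (fun ω => Quotient.mk s₁ ω) (fun ω => Quotient.mk s₁ ω)
    have e : ent (cq p m) (JJ s₁ s₂ s₃ s₄ {0, 2, 3, 4})
        = ent (cq p m) (fun a => (Quotient.mk s₁ a.1, Quotient.mk s₁ a.2, m a.1)) := by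
      apply ent_ker_congr
      intro a _ b _
      simp (config := { decide := true }) [hm, JJ_eq_iff, Prod.mk.injEq]
      tauto
    rw [e, h0, bb1, bb3]
    ring
  have c2 : ent (cq p m) (JJ s₁ s₂ s₃ s₄ {1, 2, 3, 4})
      = entropy p (s₂ ⊓ s₃ ⊓ s₄) + entropy p (s₁ ⊓ s₃ ⊓ s₄) - entropy p (s₃ ⊓ s₄) := by
    have h0 := ent_ci p m hp (fun ω => Quotient.mk s₂ ω) (fun ω => Quotient.mk s₁ ω)
    have e : ent (cq p m) (JJ s₁ s₂ s₃ s₄ {1, 2, 3, 4})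
        = ent (cq p m) (fun a => (Quotient.mk s₂ a.1, Quotient.mk s₁ a.2, m a.1)) := by
      apply ent_ker_congr
      intro a _ b _
      simp (config := { decide := true }) [hm, JJ_eq_iff, Prod.mk.injEq]
      tauto
    rw [e, h0, bb2, bb1, bb3]
  have c3 : ent (cq p m) (JJ s₁ s₂ s₃ s₄ {0, 1, 2, 3, 4})
      = ent (cq p m) (JJ s₁ s₂ s₃ s₄ {0, 1, 2, 3})
        + entropy p (s₁ ⊓ s₃ ⊓ s₄) - entropy p (s₃ ⊓ s₄) := by
    have h0 := ent_ci p m hp (fun ω' => (Quotient.mk s₁ ω', Quotient.mk s₂ ω'))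
      (fun ω => Quotient.mk s₁ ω)
    have e : ent (cq p m) (JJ s₁ s₂ s₃ s₄ {0, 1, 2, 3, 4})
        = ent (cq p m)
            (fun a => ((Quotient.mk s₁ a.1, Quotient.mk s₂ a.1), Quotient.mk s₁ a.2, m a.1)) := by
      apply ent_ker_congr
      intro a _ b _
      simp (config := { decide := true }) [hm, JJ_eq_iff, Prod.mk.injEq]
      tauto
    rw [e, h0, bb4, bb1, bb3]
  -- the nine instances of submodularity from the Zhangâ€“Yeung certificate
  have i1 := hsub {0, 4} {1, 4}
  rw [show ({0, 4} : Finset (Fin 5)) ∪ {1, 4} = {0, 1, 4} from by decide,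
    show ({0, 4} : Finset (Fin 5)) ∩ {1, 4} = {4} from by decide] at i1
  have i2 := hsub {0, 2} {2, 4}
  rw [show ({0, 2} : Finset (Fin 5)) ∪ {2, 4} = {0, 2, 4} from by decide,
    show ({0, 2} : Finset (Fin 5)) ∩ {2, 4} = {2} from by decide] at i2
  have i3 := hsub {0, 3} {3, 4}
  rw [show ({0, 3} : Finset (Fin 5)) ∪ {3, 4} = {0, 3, 4} from by decide,
    show ({0, 3} : Finset (Fin 5)) ∩ {3, 4} = {3} from by decide] at i3
  have i4 := hsub {1, 2} {2, 4}
  rw [show ({1, 2} : Finset (Fin 5)) ∪ {2, 4} = {1, 2, 4} from by decide,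
    show ({1, 2} : Finset (Fin 5)) ∩ {2, 4} = {2} from by decide] at i4
  have i5 := hsub {1, 3} {3, 4}
  rw [show ({1, 3} : Finset (Fin 5)) ∪ {3, 4} = {1, 3, 4} from by decide,
    show ({1, 3} : Finset (Fin 5)) ∩ {3, 4} = {3} from by decide] at i5
  have i6 := hsub {0, 2, 4} {0, 3, 4}
  rw [show ({0, 2, 4} : Finset (Fin 5)) ∪ {0, 3, 4} = {0, 2, 3, 4} from by decide,
    show ({0, 2, 4} : Finset (Fin 5)) ∩ {0, 3, 4} = {0, 4} from by decide] at i6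
  have i7 := hsub {1, 2, 4} {1, 3, 4}
  rw [show ({1, 2, 4} : Finset (Fin 5)) ∪ {1, 3, 4} = {1, 2, 3, 4} from by decide,
    show ({1, 2, 4} : Finset (Fin 5)) ∩ {1, 3, 4} = {1, 4} from by decide] at i7
  have i8 := hsub {0, 1, 2, 3} {0, 1, 3, 4}
  rw [show ({0, 1, 2, 3} : Finset (Fin 5)) ∪ {0, 1, 3, 4} = {0, 1, 2, 3, 4} from by decide,
    show ({0, 1, 2, 3} : Finset (Fin 5)) ∩ {0, 1, 3, 4} = {0, 1, 3} from by decide] at i8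
  have i9 := hsub {0, 1, 3} {0, 1, 4}
  rw [show ({0, 1, 3} : Finset (Fin 5)) ∪ {0, 1, 4} = {0, 1, 3, 4} from by decide,
    show ({0, 1, 3} : Finset (Fin 5)) ∩ {0, 1, 4} = {0, 1} from by decide] at i9
  linarith [i1, i2, i3, i4, i5, i6, i7, i8, i9, b0, b2, b3, b01, b02, b03, b12, b13,
    sw0, sw2, sw3, c1, c2, c3]
end
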